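/- arXiv:0905.1142 — 5 statements merged into one kernel-verified Lean document; each statement's English description precedes it below -/
import Mathlib

section
/- Let f : B → ℝ be measurable and let r₀ ∈ (0, √b). Suppose ∫_{B_{r₀}} f(m)² dm < ∞ and for almost every r ∈ (r₀, √b) one has ∫_{∂B_r} (f(m)/d(m))² dH^{n−1}(m) ≤ 1. Then f is Lebesgue integrable on B, i.e. ∫_B |f(m)| dm < ∞. -/
set_option maxHeartbeats 1600000

open MeasureTheory Metric Set
open scoped Pointwise ENNReal NNReal

lemma cone_vol_le {n : ℕ} (x₀ : EuclideanSpace ℝ (Fin n)) (hx₀ : ‖x₀‖ = 1)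
    {δ : ℝ} (hδ : 0 < δ)
    {t : Set (EuclideanSpace ℝ (Fin n))} (ht : t ⊆ Metric.closedBall x₀ δ) :
    volume (Set.Ioo (0:ℝ) 1 • t) ≤
      (⌈1/δ⌉₊ : ℝ≥0∞) * (ENNReal.ofReal ((2*δ) ^ n) *
        volume (Metric.ball (0:EuclideanSpace ℝ (Fin n)) 1)) := by
  set K := ⌈1/δ⌉₊ with hK
  have hcover : Set.Ioo (0:ℝ) 1 • t ⊆
      ⋃ k ∈ Finset.range K, Metric.closedBall (((k : ℝ) * δ) • x₀) (2*δ) := by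
    rintro v hv
    rcases hv with ⟨c, hc, x, hx, rfl⟩
    have hc0 : (0:ℝ) < c := hc.1
    have hc1 : c < 1 := hc.2
    set k := ⌊c/δ⌋₊ with hk
    have hkle : (k : ℝ) * δ ≤ c := by
      have := Nat.floor_le (by positivity : (0:ℝ) ≤ c/δ)
      calc (k:ℝ) * δ ≤ (c/δ) * δ := by nlinarith
        _ = c := by field_simp
    have hclt : c < ((k : ℝ) + 1) * δ := by
      have := Nat.lt_floor_add_one (c/δ)
      calc c = (c/δ) * δ := by field_simp
        _ < ((k:ℝ)+1) * δ := by nlinarith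
    have hkK : k ∈ Finset.range K := by
      refine Finset.mem_range.2 ?_
      have h1 : (k : ℝ) ≤ c/δ := Nat.floor_le (by positivity)
      have h2 : c/δ < 1/δ := by
        gcongr
      have h3 : (1:ℝ)/δ ≤ K := Nat.le_ceil _
      exact_mod_cast lt_of_le_of_lt h1 (lt_of_lt_of_le h2 h3)
    clear_value k
    refine Set.mem_iUnion₂.2 ⟨k, hkK, ?_⟩
    have hxx₀ : dist x x₀ ≤ δ := ht hx
    have h1 : dist (c • x) (c • x₀) ≤ δ := by
      rw [dist_smul₀]
      calc ‖c‖ * dist x x₀ ≤ 1 * δ := by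
            apply mul_le_mul _ hxx₀ dist_nonneg zero_le_one
            rw [Real.norm_eq_abs, abs_of_pos hc0]; exact hc1.le
        _ = δ := one_mul δ
    have h2 : dist (c • x₀) (((k:ℝ) * δ) • x₀) ≤ δ := by
      rw [dist_eq_norm, ← sub_smul, norm_smul, hx₀, mul_one, Real.norm_eq_abs]
      rw [abs_of_nonneg (by linarith)]
      nlinarith
    have := dist_triangle (c • x) (c • x₀) (((k:ℝ) * δ) • x₀)
    exact Metric.mem_closedBall.2 (by linarith)
  calc volume (Set.Ioo (0:ℝ) 1 • t)
      ≤ volume (⋃ k ∈ Finset.range K, Metric.closedBall (((k : ℝ) * δ) • x₀) (2*δ)) :=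
        measure_mono hcover
    _ ≤ ∑ k ∈ Finset.range K, volume (Metric.closedBall (((k : ℝ) * δ) • x₀) (2*δ)) :=
        measure_biUnion_finset_le _ _
    _ = ∑ k ∈ Finset.range K, ENNReal.ofReal ((2*δ) ^ n) * volume (Metric.ball (0:EuclideanSpace ℝ (Fin n)) 1) := by
        refine Finset.sum_congr rfl fun k _ => ?_
        rw [Measure.addHaar_closedBall _ _ (by positivity), finrank_euclideanSpace_fin]
    _ = (K : ℝ≥0∞) * (ENNReal.ofReal ((2*δ) ^ n) * volume (Metric.ball (0:EuclideanSpace ℝ (Fin n)) 1)) := by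
        rw [Finset.sum_const, Finset.card_range, nsmul_eq_mul]

lemma toSphere_le_smul_hausdorff (n : ℕ) (hn : 1 ≤ n) :
    ∃ C : ℝ≥0∞, C ≠ 0 ∧ C ≠ ⊤ ∧
      (volume : Measure (EuclideanSpace ℝ (Fin n))).toSphere ≤
        C • (μH[(n:ℝ)-1] : Measure (Metric.sphere (0:EuclideanSpace ℝ (Fin n)) 1)) := by
  set E := EuclideanSpace ℝ (Fin n) with hE
  set σ := (volume : Measure E).toSphere with hσ
  set Cb := volume (Metric.ball (0:E) 1) with hCb
  set C : ℝ≥0∞ := ENNReal.ofReal ((n:ℝ) * 2^(n+1)) * Cb + σ univ + 1 with hC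
  have hC0 : C ≠ 0 := by simp [hC]
  have hCtop : C ≠ ⊤ := by
    have h1 : Cb ≠ ⊤ := measure_ball_lt_top.ne
    have h2 : σ univ ≠ ⊤ := (measure_lt_top σ univ).ne
    simp [hC, ENNReal.add_ne_top, ENNReal.mul_ne_top, h1, h2]
  refine ⟨C, hC0, hCtop, ?_⟩
  -- main claim : ∀ s, diam s ≤ 1 → σ s ≤ C * diam s ^ ((n:ℝ)-1)
  have claim : ∀ s : Set (Metric.sphere (0:E) 1), EMetric.diam s ≤ 1 →
      σ s ≤ C * EMetric.diam s ^ ((n:ℝ)-1) := by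
    intro s hs
    rcases s.eq_empty_or_nonempty with rfl | ⟨x₀, hx₀⟩
    · simp
    set D := EMetric.diam s with hD
    have hDtop : D ≠ ⊤ := (lt_of_le_of_lt hs ENNReal.one_lt_top).ne
    rcases eq_or_ne D 0 with hD0 | hD0
    · -- s is a subsingleton
      have hsub : s ⊆ {x₀} := by
        intro y hy
        have : EMetric.diam s = 0 := hD0
        have := (EMetric.diam_eq_zero_iff).1 this
        exact this hy hx₀ ▸ rfl
      rcases eq_or_lt_of_le hn with h1 | h2
      · -- n = 1 : use σ s ≤ σ univ and diam ^ 0 = 1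
        have hexp : ((n:ℝ) - 1) = 0 := by rw [← h1]; norm_num
        rw [hexp, ENNReal.rpow_zero, mul_one]
        calc σ s ≤ σ univ := measure_mono (subset_univ _)
          _ ≤ C := by rw [hC]; exact le_add_of_le_of_nonneg (le_add_left le_rfl) zero_le_one
      · -- n ≥ 2 : σ {x₀} = 0 since a segment is a null set
        have h0 : σ {x₀} = 0 := by
          have hm : MeasurableSet ({x₀} : Set (Metric.sphere (0:E) 1)) :=
            measurableSet_singleton _
          rw [hσ, Measure.toSphere_apply' _ hm, Set.image_singleton]
          have hsub2 : Set.Ioo (0:ℝ) 1 • ({(x₀ : E)} : Set E) ⊆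
              (Submodule.span ℝ {(x₀ : E)} : Submodule ℝ E) := by
            rintro v ⟨c, hc, x, hx, rfl⟩
            rcases hx with rfl
            exact Submodule.smul_mem _ _ (Submodule.mem_span_singleton_self _)
          have hne : (Submodule.span ℝ {(x₀ : E)}) ≠ ⊤ := by
            intro h
            have hrk : Module.finrank ℝ E = n := finrank_euclideanSpace_fin
            have hx0ne : (x₀ : E) ≠ 0 := by
              have := x₀.2
              rw [mem_sphere_zero_iff_norm] at this
              intro h0; rw [h0, norm_zero] at this; norm_num at this
            have h1 : Module.finrank ℝ (Submodule.span ℝ {(x₀:E)}) = 1 :=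
              finrank_span_singleton hx0ne
            rw [h, finrank_top, hrk] at h1
            omega
          have := Measure.addHaar_submodule (volume : Measure E) _ hne
          have h00 : volume (Set.Ioo (0:ℝ) 1 • ({(x₀ : E)} : Set E)) = 0 :=
            measure_mono_null hsub2 this
          rw [h00, mul_zero]
        calc σ s ≤ σ {x₀} := measure_mono hsub
          _ = 0 := h0
          _ ≤ _ := zero_le
    · -- main case : 0 < diam s
      set δ := D.toReal with hδdef
      have hδ : 0 < δ := ENNReal.toReal_pos hD0 hDtop
      have hδ1 : δ ≤ 1 := by
        rw [hδdef]
        exact ENNReal.toReal_le_of_le_ofReal zero_le_one (by simpa using hs)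
      -- the ball around x₀
      set B : Set (Metric.sphere (0:E) 1) := Subtype.val ⁻¹' (Metric.closedBall (x₀ : E) δ)
        with hB
      have hBmeas : MeasurableSet B := measurable_subtype_coe measurableSet_closedBall
      have hsB : s ⊆ B := by
        intro y hy
        have h1 : edist y x₀ ≤ D := EMetric.edist_le_diam_of_mem hy hx₀
        have h2 : dist y x₀ ≤ δ := by
          rw [hδdef, dist_edist]
          exact ENNReal.toReal_mono hDtop h1
        simpa [hB, Metric.mem_closedBall] using h2
      have hcone : Subtype.val '' B ⊆ Metric.closedBall (x₀ : E) δ := by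
        rintro v ⟨y, hy, rfl⟩; exact hy
      have key := cone_vol_le (x₀ : E)
        (by simpa [mem_sphere_zero_iff_norm] using x₀.2) hδ hcone
      have hσB : σ B = (n : ℝ≥0∞) * volume (Set.Ioo (0:ℝ) 1 • (Subtype.val '' B)) := by
        rw [hσ, Measure.toSphere_apply' _ hBmeas, finrank_euclideanSpace_fin]
      -- numeric bound
      have hKle : ((⌈1/δ⌉₊ : ℝ) ) ≤ 2/δ := by
        have h1 : (⌈1/δ⌉₊ : ℝ) ≤ 1/δ + 1 := (Nat.ceil_lt_add_one (by positivity)).le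
        have h2 : (1:ℝ) ≤ 1/δ := by
          rw [le_div_iff₀ hδ]; linarith
        have : 1/δ + 1 ≤ 2/δ := by
          rw [div_add' _ _ _ hδ.ne', div_le_div_iff₀ hδ hδ]; nlinarith
        linarith
      have harith : (n : ℝ) * ((2/δ) * ((2*δ)^n)) = ((n:ℝ) * 2^(n+1)) * δ^(n-1) := by
        rw [mul_pow]
        have hδn : δ ^ n = δ^(n-1) * δ := by
          conv_lhs => rw [← Nat.sub_add_cancel hn]
          rw [pow_succ]
        rw [hδn]
        field_simp
        ring
      calc σ s ≤ σ B := measure_mono hsB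
        _ = (n : ℝ≥0∞) * volume (Set.Ioo (0:ℝ) 1 • (Subtype.val '' B)) := hσB
        _ ≤ (n : ℝ≥0∞) * ((⌈1/δ⌉₊ : ℝ≥0∞) * (ENNReal.ofReal ((2*δ) ^ n) * Cb)) := by
            gcongr
        _ = ENNReal.ofReal ((n:ℝ) * ((⌈1/δ⌉₊ : ℝ) * ((2*δ) ^ n))) * Cb := by
            rw [ENNReal.ofReal_mul (by positivity), ENNReal.ofReal_mul (by positivity)]
            rw [ENNReal.ofReal_natCast, ENNReal.ofReal_natCast]
            ring
        _ ≤ ENNReal.ofReal ((n:ℝ) * ((2/δ) * ((2*δ) ^ n))) * Cb := by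
            gcongr
        _ = ENNReal.ofReal ((n:ℝ) * 2^(n+1)) * ENNReal.ofReal (δ^(n-1)) * Cb := by
            rw [harith, ENNReal.ofReal_mul (by positivity)]
        _ = ENNReal.ofReal ((n:ℝ) * 2^(n+1)) * Cb * D ^ ((n:ℝ)-1) := by
            have h1 : ENNReal.ofReal (δ^(n-1)) = D ^ ((n:ℝ)-1) := by
              have h2 : δ^(n-1) = δ ^ ((n:ℝ)-1) := by
                rw [show ((n:ℝ)-1) = ((n-1 : ℕ) : ℝ) by
                  rw [Nat.cast_sub hn]; norm_num]
                rw [Real.rpow_natCast]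
              rw [h2, ← ENNReal.ofReal_rpow_of_pos hδ, hδdef, ENNReal.ofReal_toReal hDtop]
            rw [h1]; ring
        _ ≤ C * D ^ ((n:ℝ)-1) := by
            gcongr
            rw [hC]
            exact le_add_of_le_of_nonneg (le_add_right le_rfl) zero_le_one
  -- conclude via `le_hausdorffMeasure`
  have hle : C⁻¹ • σ ≤ μH[(n:ℝ)-1] := by
    refine Measure.le_hausdorffMeasure _ _ 1 zero_lt_one fun s hs => ?_
    have := claim s hs
    rw [Measure.smul_apply, smul_eq_mul]
    rw [ENNReal.inv_mul_le_iff hC0 hCtop]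
    exact this
  intro A
  have := hle A
  rw [Measure.smul_apply, smul_eq_mul] at this ⊢
  rw [← ENNReal.inv_mul_le_iff hC0 hCtop]
  exact this

lemma sphere_cov (n : ℕ) (hn : 1 ≤ n) {r : ℝ} (hr : 0 < r)
    (g : EuclideanSpace ℝ (Fin n) → ℝ≥0∞) :
    ∫⁻ m in Metric.sphere (0:EuclideanSpace ℝ (Fin n)) r, g m ∂(μH[(n:ℝ)-1])
      = (ENNReal.ofReal r) ^ ((n:ℝ)-1) *
        ∫⁻ ω : Metric.sphere (0:EuclideanSpace ℝ (Fin n)) 1, g (r • (ω : EuclideanSpace ℝ (Fin n)))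
          ∂(μH[(n:ℝ)-1]) := by
  have hd : (0:ℝ) ≤ (n:ℝ) - 1 := by
    have : (1:ℝ) ≤ n := by exact_mod_cast hn
    linarith
  set T : Metric.sphere (0:EuclideanSpace ℝ (Fin n)) 1 → EuclideanSpace ℝ (Fin n) :=
    (fun x : EuclideanSpace ℝ (Fin n) => r • x) ∘ Subtype.val with hT
  have hTemb : MeasurableEmbedding T := by
    have h1 : MeasurableEmbedding (fun x : EuclideanSpace ℝ (Fin n) => r • x) :=
      (MeasurableEquiv.smul₀ r hr.ne' : EuclideanSpace ℝ (Fin n) ≃ᵐ _).measurableEmbedding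
    have h2 : MeasurableEmbedding
        (Subtype.val : Metric.sphere (0:EuclideanSpace ℝ (Fin n)) 1 → EuclideanSpace ℝ (Fin n)) :=
      MeasurableEmbedding.subtype_coe isClosed_sphere.measurableSet
    exact h1.comp h2
  have hrange : Set.range T = Metric.sphere (0:EuclideanSpace ℝ (Fin n)) r := by
    rw [hT, Set.range_comp, Subtype.range_coe, Set.image_smul,
      smul_sphere' hr.ne', smul_zero, Real.norm_eq_abs, abs_of_pos hr, mul_one]
  have hcomap : Measure.comap T (μH[(n:ℝ)-1] : Measure (EuclideanSpace ℝ (Fin n))) =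
      ((‖r‖₊ ^ ((n:ℝ)-1) : ℝ≥0) : ℝ≥0∞) •
        (μH[(n:ℝ)-1] : Measure (Metric.sphere (0:EuclideanSpace ℝ (Fin n)) 1)) := by
    refine Measure.ext fun A hA => ?_
    rw [hTemb.comap_apply, Measure.smul_apply, smul_eq_mul]
    have him : T '' A = r • (Subtype.val '' A) := by
      rw [hT, Set.image_comp, Set.image_smul]
    rw [him, Measure.hausdorffMeasure_smul₀ hd hr.ne',
      (isometry_subtype_coe).hausdorffMeasure_image (Or.inl hd)]
    rfl
  calc ∫⁻ m in Metric.sphere (0:EuclideanSpace ℝ (Fin n)) r, g m ∂(μH[(n:ℝ)-1])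
      = ∫⁻ m, g m ∂((μH[(n:ℝ)-1] : Measure (EuclideanSpace ℝ (Fin n))).restrict (Set.range T)) :=
        by rw [hrange]
    _ = ∫⁻ m, g m ∂(Measure.map T (Measure.comap T
          (μH[(n:ℝ)-1] : Measure (EuclideanSpace ℝ (Fin n))))) := by
        rw [hTemb.map_comap]
    _ = ∫⁻ ω, g (T ω) ∂(Measure.comap T (μH[(n:ℝ)-1] : Measure (EuclideanSpace ℝ (Fin n)))) :=
        hTemb.lintegral_map g
    _ = (ENNReal.ofReal r) ^ ((n:ℝ)-1) *
          ∫⁻ ω : Metric.sphere (0:EuclideanSpace ℝ (Fin n)) 1,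
            g (r • (ω : EuclideanSpace ℝ (Fin n))) ∂(μH[(n:ℝ)-1]) := by
        rw [hcomap, lintegral_smul_measure, smul_eq_mul]
        congr 1
        rw [ENNReal.coe_rpow_of_nonneg _ hd]
        congr 1
        rw [← enorm_eq_nnnorm, Real.enorm_eq_ofReal hr.le]


/-- If `f` is measurable, square integrable on the ball `B_{r₀}`, and for almost every
`r ∈ (r₀, √b)` the trace bound `∫_{∂B_r} (f/d)² dH^{n−1} ≤ 1` holds (with
`d(m) = √b − ‖m‖`), then `f` is Lebesgue integrable on the ball `B = B(0, √b)`.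
This is the claim that the boundary requirement `lim_{r→√b} ‖f d^{−1}‖_{L²(∂B_r)} = 0`
ensures `f ∈ L¹(B)`. -/
theorem boundary_requirement_implies_L1
    (n : ℕ) (hn : 1 ≤ n) (b : ℝ) (hb : 0 < b)
    (f : EuclideanSpace ℝ (Fin n) → ℝ) (hf : Measurable f)
    (r₀ : ℝ) (hr₀ : r₀ ∈ Set.Ioo 0 (Real.sqrt b))
    (hf2 : MeasureTheory.IntegrableOn (fun m => f m ^ 2)
      (Metric.ball (0 : EuclideanSpace ℝ (Fin n)) r₀))
    (hbd : ∀ᵐ r ∂(MeasureTheory.volume.restrict (Set.Ioo r₀ (Real.sqrt b))),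
      (∫⁻ m in Metric.sphere (0 : EuclideanSpace ℝ (Fin n)) r,
          ENNReal.ofReal ((f m / (Real.sqrt b - ‖m‖)) ^ 2) ∂(μH[(n : ℝ) - 1])) ≤ 1) :
    MeasureTheory.IntegrableOn f
      (Metric.ball (0 : EuclideanSpace ℝ (Fin n)) (Real.sqrt b)) := by
  haveI : Nonempty (Fin n) := ⟨⟨0, hn⟩⟩
  set sb := Real.sqrt b with hsbdef
  have hsb : 0 < sb := Real.sqrt_pos.2 hb
  obtain ⟨hr₀pos, hr₀lt⟩ := hr₀
  -- inner ball
  have h1 : IntegrableOn f (Metric.ball (0 : EuclideanSpace ℝ (Fin n)) r₀) := by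
    have hconst : IntegrableOn (fun _ : EuclideanSpace ℝ (Fin n) => (1:ℝ))
        (Metric.ball (0 : EuclideanSpace ℝ (Fin n)) r₀) :=
      integrableOn_const measure_ball_lt_top.ne
    refine Integrable.mono' (hf2.add hconst) hf.aestronglyMeasurable.restrict ?_
    refine Filter.Eventually.of_forall fun x => ?_
    simp only [Real.norm_eq_abs, Pi.add_apply]
    nlinarith [abs_nonneg (f x), sq_abs (f x), sq_nonneg (|f x| - 1)]
  -- annulus
  set A := Metric.ball (0 : EuclideanSpace ℝ (Fin n)) sb \
      Metric.ball (0 : EuclideanSpace ℝ (Fin n)) r₀ with hA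
  have hAmeas : MeasurableSet A := measurableSet_ball.diff measurableSet_ball
  have h2 : IntegrableOn f A := by
    refine ⟨hf.aestronglyMeasurable.restrict, ?_⟩
    show (∫⁻ x, (‖f x‖₊ : ℝ≥0∞) ∂(volume.restrict A)) < ⊤
    -- notation
    obtain ⟨C, hC0, hCtop, hCle⟩ := toSphere_le_smul_hausdorff n hn
    haveI : Nontrivial (EuclideanSpace ℝ (Fin n)) := inferInstance
    set σ := (volume : Measure (EuclideanSpace ℝ (Fin n))).toSphere with hσdef
    set G : EuclideanSpace ℝ (Fin n) → ℝ≥0∞ :=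
      fun x => A.indicator (fun y => (‖f y‖₊ : ℝ≥0∞)) x with hGdef
    have hGmeas : Measurable G := (hf.nnnorm.coe_nnreal_ennreal).indicator hAmeas
    have hd : (0:ℝ) ≤ (n:ℝ) - 1 := by
      have : (1:ℝ) ≤ n := by exact_mod_cast hn
      linarith
    -- constants
    set c₀ : ℝ≥0∞ := (ENNReal.ofReal r₀) ^ ((n:ℝ)-1) with hc₀def
    have hc₀0 : c₀ ≠ 0 := by
      refine (ENNReal.rpow_pos ?_ ENNReal.ofReal_ne_top).ne'
      exact ENNReal.ofReal_pos.2 hr₀pos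
    set M : ℝ≥0∞ := (C * c₀⁻¹) ^ ((1:ℝ)/2) *
      ((ENNReal.ofReal sb) ^ (2:ℝ) * σ univ) ^ ((1:ℝ)/2) with hMdef
    have hMtop : M ≠ ⊤ := by
      apply ENNReal.mul_ne_top
      · exact ENNReal.rpow_ne_top_of_nonneg (by norm_num)
          (ENNReal.mul_ne_top hCtop (ENNReal.inv_ne_top.2 hc₀0))
      · exact ENNReal.rpow_ne_top_of_nonneg (by norm_num)
          (ENNReal.mul_ne_top (ENNReal.rpow_ne_top_of_nonneg (by norm_num) ENNReal.ofReal_ne_top)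
            (measure_ne_top σ univ))
    -- the inner sphere integral function
    set Ψ : ℝ → ℝ≥0∞ := fun t => ∫⁻ ω, G (t • (ω : EuclideanSpace ℝ (Fin n))) ∂σ with hΨdef
    -- key bound on Ψ
    have key : ∀ t : ℝ, t ∈ Set.Ioo r₀ sb →
        (∫⁻ m in Metric.sphere (0 : EuclideanSpace ℝ (Fin n)) t,
          ENNReal.ofReal ((f m / (sb - ‖m‖)) ^ 2) ∂(μH[(n : ℝ) - 1])) ≤ 1 → Ψ t ≤ M := by
      intro t ht hPb
      have htpos : 0 < t := hr₀pos.trans ht.1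
      have hdt : 0 < sb - t := sub_pos.2 ht.2
      set u : Metric.sphere (0:EuclideanSpace ℝ (Fin n)) 1 → ℝ≥0∞ :=
        fun ω => ENNReal.ofReal (|f (t • (ω : EuclideanSpace ℝ (Fin n)))| / (sb - t)) with hudef
      set v : Metric.sphere (0:EuclideanSpace ℝ (Fin n)) 1 → ℝ≥0∞ :=
        fun _ => ENNReal.ofReal (sb - t) with hvdef
      have humeas : Measurable u := by
        apply Measurable.ennreal_ofReal
        apply Measurable.div_const
        apply Measurable.abs
        exact hf.comp ((continuous_subtype_val.const_smul t).measurable)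
      have hnorm : ∀ ω : Metric.sphere (0:EuclideanSpace ℝ (Fin n)) 1,
          ‖t • (ω : EuclideanSpace ℝ (Fin n))‖ = t := by
        intro ω
        have h1 : ‖(ω : EuclideanSpace ℝ (Fin n))‖ = 1 := mem_sphere_zero_iff_norm.1 ω.2
        rw [norm_smul, h1, mul_one, Real.norm_eq_abs, abs_of_pos htpos]
      have step_uv : Ψ t ≤ ∫⁻ ω, (u * v) ω ∂σ := by
        refine lintegral_mono fun ω => ?_
        have h1 : G (t • (ω : EuclideanSpace ℝ (Fin n)))
            ≤ (‖f (t • (ω : EuclideanSpace ℝ (Fin n)))‖₊ : ℝ≥0∞) :=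
          Set.indicator_le_self _ _ _
        refine h1.trans (le_of_eq ?_)
        show (‖f (t • (ω : EuclideanSpace ℝ (Fin n)))‖₊ : ℝ≥0∞) = u ω * v ω
        rw [hudef, hvdef, ← enorm_eq_nnnorm, Real.enorm_eq_ofReal_abs,
          ← ENNReal.ofReal_mul (by positivity), div_mul_cancel₀ _ hdt.ne']
      have holder := ENNReal.lintegral_mul_le_Lp_mul_Lq σ
        (Real.HolderConjugate.two_two : Real.HolderConjugate 2 2)
        humeas.aemeasurable measurable_const.aemeasurable (f := u) (g := v)
      -- factor 1
      have hfac1 : (∫⁻ ω, u ω ^ (2:ℝ) ∂σ) ≤ C * c₀⁻¹ := by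
        have hgq : ∀ ω : Metric.sphere (0:EuclideanSpace ℝ (Fin n)) 1,
            u ω ^ (2:ℝ) = (fun m => ENNReal.ofReal ((f m / (sb - ‖m‖)) ^ 2))
              (t • (ω : EuclideanSpace ℝ (Fin n))) := by
          intro ω
          show (ENNReal.ofReal (|f (t • (ω : EuclideanSpace ℝ (Fin n)))| / (sb - t))) ^ (2:ℝ)
            = ENNReal.ofReal ((f (t • (ω : EuclideanSpace ℝ (Fin n)))
                / (sb - ‖t • (ω : EuclideanSpace ℝ (Fin n))‖)) ^ 2)
          rw [hnorm ω, ENNReal.ofReal_rpow_of_nonneg (by positivity) (by norm_num)]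
          congr 1
          rw [show ((2:ℝ)) = ((2:ℕ):ℝ) by norm_num, Real.rpow_natCast]
          rw [div_pow, div_pow, sq_abs]
        have h2 : (∫⁻ ω, u ω ^ (2:ℝ) ∂σ)
            ≤ C * ∫⁻ ω : Metric.sphere (0:EuclideanSpace ℝ (Fin n)) 1,
                (fun m => ENNReal.ofReal ((f m / (sb - ‖m‖)) ^ 2))
                (t • (ω : EuclideanSpace ℝ (Fin n))) ∂(μH[(n:ℝ)-1]) := by
          rw [← smul_eq_mul, ← lintegral_smul_measure]
          refine lintegral_mono' hCle fun ω => le_of_eq (hgq ω)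
        refine h2.trans ?_
        have hcov := sphere_cov n hn htpos (fun m => ENNReal.ofReal ((f m / (sb - ‖m‖)) ^ 2))
        have htne0 : (ENNReal.ofReal t) ^ ((n:ℝ)-1) ≠ 0 :=
          (ENNReal.rpow_pos (ENNReal.ofReal_pos.2 htpos) ENNReal.ofReal_ne_top).ne'
        have htnetop : (ENNReal.ofReal t) ^ ((n:ℝ)-1) ≠ ⊤ :=
          ENNReal.rpow_ne_top_of_nonneg hd ENNReal.ofReal_ne_top
        have heq : ∫⁻ ω : Metric.sphere (0:EuclideanSpace ℝ (Fin n)) 1,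
              (fun m => ENNReal.ofReal ((f m / (sb - ‖m‖)) ^ 2))
              (t • (ω : EuclideanSpace ℝ (Fin n))) ∂(μH[(n:ℝ)-1])
            = ((ENNReal.ofReal t) ^ ((n:ℝ)-1))⁻¹ *
              ∫⁻ m in Metric.sphere (0 : EuclideanSpace ℝ (Fin n)) t,
                ENNReal.ofReal ((f m / (sb - ‖m‖)) ^ 2) ∂(μH[(n : ℝ) - 1]) := by
          rw [hcov, ← mul_assoc, ENNReal.inv_mul_cancel htne0 htnetop, one_mul]
        rw [heq]
        have h3 : ((ENNReal.ofReal t) ^ ((n:ℝ)-1))⁻¹ ≤ c₀⁻¹ := by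
          rw [ENNReal.inv_le_inv]
          exact ENNReal.rpow_le_rpow (ENNReal.ofReal_le_ofReal ht.1.le) hd
        calc C * (((ENNReal.ofReal t) ^ ((n:ℝ)-1))⁻¹ *
              ∫⁻ m in Metric.sphere (0 : EuclideanSpace ℝ (Fin n)) t,
                ENNReal.ofReal ((f m / (sb - ‖m‖)) ^ 2) ∂(μH[(n : ℝ) - 1]))
            ≤ C * (c₀⁻¹ * 1) := by gcongr
          _ = C * c₀⁻¹ := by rw [mul_one]
      -- factor 2
      have hfac2 : (∫⁻ ω, v ω ^ (2:ℝ) ∂σ) ≤ (ENNReal.ofReal sb) ^ (2:ℝ) * σ univ := by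
        rw [hvdef]
        simp only [lintegral_const]
        refine mul_le_mul' ?_ le_rfl
        exact ENNReal.rpow_le_rpow (ENNReal.ofReal_le_ofReal (by linarith)) (by norm_num)
      calc Ψ t ≤ ∫⁻ ω, (u * v) ω ∂σ := step_uv
        _ ≤ (∫⁻ ω, u ω ^ (2:ℝ) ∂σ) ^ ((1:ℝ)/2) * (∫⁻ ω, v ω ^ (2:ℝ) ∂σ) ^ ((1:ℝ)/2) := holder
        _ ≤ M := by
            rw [hMdef]
            exact mul_le_mul' (ENNReal.rpow_le_rpow hfac1 (by norm_num))
              (ENNReal.rpow_le_rpow hfac2 (by norm_num))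
    -- reduce to a full-space lintegral
    rw [← lintegral_indicator hAmeas]
    -- pass to the subtype {0}ᶜ
    have hzero : MeasurableSet ({(0 : EuclideanSpace ℝ (Fin n))}ᶜ) :=
      (measurableSet_singleton _).compl
    have step1 : ∫⁻ x, G x ∂(volume : Measure (EuclideanSpace ℝ (Fin n)))
        = ∫⁻ x : ({(0 : EuclideanSpace ℝ (Fin n))}ᶜ : Set _), G x.1
            ∂(Measure.comap Subtype.val (volume : Measure (EuclideanSpace ℝ (Fin n)))) := by
      have h := setLIntegral_subtype (μ := (volume : Measure (EuclideanSpace ℝ (Fin n)))) hzero univ G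
      rw [Measure.restrict_univ, Set.image_univ, Subtype.range_coe,
        MeasureTheory.restrict_compl_singleton] at h
      exact h.symm
    have mp := (volume :
      Measure (EuclideanSpace ℝ (Fin n))).measurePreserving_homeomorphUnitSphereProd
    rw [finrank_euclideanSpace_fin] at mp
    set Φ : Metric.sphere (0:EuclideanSpace ℝ (Fin n)) 1 × Set.Ioi (0:ℝ) → ℝ≥0∞ :=
      fun p => G ((p.2 : ℝ) • (p.1 : EuclideanSpace ℝ (Fin n))) with hΦdef
    have hΦmeas : Measurable Φ := by
      apply hGmeas.comp
      exact ((continuous_subtype_val.comp continuous_snd).smul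
        (continuous_subtype_val.comp continuous_fst)).measurable
    have step2 : ∫⁻ x : ({(0 : EuclideanSpace ℝ (Fin n))}ᶜ : Set _), G x.1
          ∂(Measure.comap Subtype.val (volume : Measure (EuclideanSpace ℝ (Fin n))))
        = ∫⁻ p, Φ p ∂(σ.prod (Measure.volumeIoiPow (n - 1))) := by
      rw [← mp.lintegral_comp hΦmeas]
      refine lintegral_congr fun x => ?_
      have hx0 : (x : EuclideanSpace ℝ (Fin n)) ≠ 0 := x.2
      show G x.1 = G ((‖(x : EuclideanSpace ℝ (Fin n))‖ / 1) • ((1:ℝ) • ‖(x : EuclideanSpace ℝ (Fin n))‖⁻¹ •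
        (x : EuclideanSpace ℝ (Fin n))))
      rw [div_one, one_smul, smul_inv_smul₀ (norm_ne_zero_iff.2 hx0)]
    have step3 : ∫⁻ p, Φ p ∂(σ.prod (Measure.volumeIoiPow (n - 1)))
        = ∫⁻ t : Set.Ioi (0:ℝ), ∫⁻ ω, Φ (ω, t) ∂σ ∂(Measure.volumeIoiPow (n - 1)) :=
      lintegral_prod_symm Φ hΦmeas.aemeasurable
    have hΨm : Measurable fun t : Set.Ioi (0:ℝ) => Ψ (t : ℝ) := by
      have h1 : Measurable (Function.uncurry fun (ω : Metric.sphere (0:EuclideanSpace ℝ (Fin n)) 1)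
          (t : Set.Ioi (0:ℝ)) => Φ (ω, t)) := hΦmeas
      exact h1.lintegral_prod_left
    have step4 : ∫⁻ t : Set.Ioi (0:ℝ), ∫⁻ ω, Φ (ω, t) ∂σ ∂(Measure.volumeIoiPow (n - 1))
        = ∫⁻ t in Set.Ioi (0:ℝ),
            ENNReal.ofReal (t ^ (n-1)) * Ψ t ∂(volume : Measure ℝ) := by
      rw [Measure.volumeIoiPow,
        lintegral_withDensity_eq_lintegral_mul _
          ((measurable_subtype_coe.pow_const _).ennreal_ofReal) hΨm]
      have h := setLIntegral_subtype (μ := (volume : Measure ℝ)) (s := Set.Ioi (0:ℝ)) measurableSet_Ioi univ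
        (fun t : ℝ => ENNReal.ofReal (t ^ (n-1)) * Ψ t)
      rw [Measure.restrict_univ, Set.image_univ, Subtype.range_coe] at h
      exact h
    rw [step1, step2, step3, step4]
    -- final estimate
    have hbd' : ∀ᵐ t ∂(volume : Measure ℝ), t ∈ Set.Ioo r₀ sb →
        (∫⁻ m in Metric.sphere (0 : EuclideanSpace ℝ (Fin n)) t,
          ENNReal.ofReal ((f m / (sb - ‖m‖)) ^ 2) ∂(μH[(n : ℝ) - 1])) ≤ 1 :=
      (ae_restrict_iff' measurableSet_Ioo).1 hbd
    have hner : ∀ᵐ t ∂(volume : Measure ℝ), t ≠ r₀ := by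
      rw [ae_iff]
      have h : {a : ℝ | ¬ a ≠ r₀} = {r₀} := by ext a; simp
      rw [h]
      exact measure_singleton r₀
    have hfinal : ∫⁻ t in Set.Ioi (0:ℝ),
        ENNReal.ofReal (t ^ (n-1)) * Ψ t ∂(volume : Measure ℝ)
        ≤ (ENNReal.ofReal (sb ^ (n-1)) * M) * volume (Set.Ioo r₀ sb) := by
      have hmono : ∀ᵐ t ∂((volume : Measure ℝ).restrict (Set.Ioi (0:ℝ))),
          ENNReal.ofReal (t ^ (n-1)) * Ψ t ≤
            (Set.Ioo r₀ sb).indicator (fun _ => ENNReal.ofReal (sb ^ (n-1)) * M) t := by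
        filter_upwards [ae_restrict_of_ae hbd', ae_restrict_of_ae hner,
          ae_restrict_mem measurableSet_Ioi] with t hP hne ht
        by_cases htI : t ∈ Set.Ioo r₀ sb
        · rw [Set.indicator_of_mem htI]
          have htpos : 0 < t := hr₀pos.trans htI.1
          refine mul_le_mul' (ENNReal.ofReal_le_ofReal ?_) (key t htI (hP htI))
          exact pow_le_pow_left₀ htpos.le htI.2.le _
        · rw [Set.indicator_of_notMem htI]
          have hΨ0 : Ψ t = 0 := by
            have hz : ∀ ω : Metric.sphere (0:EuclideanSpace ℝ (Fin n)) 1,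
                G (t • (ω : EuclideanSpace ℝ (Fin n))) = 0 := by
              intro ω
              refine Set.indicator_of_notMem ?_ _
              have h1 : ‖(ω : EuclideanSpace ℝ (Fin n))‖ = 1 := mem_sphere_zero_iff_norm.1 ω.2
              have htpos : 0 < t := ht
              have hnorm : ‖t • (ω : EuclideanSpace ℝ (Fin n))‖ = t := by
                rw [norm_smul, h1, mul_one, Real.norm_eq_abs, abs_of_pos htpos]
              rintro ⟨hmem1, hmem2⟩
              rw [mem_ball_zero_iff, hnorm] at hmem1
              have h2 : r₀ ≤ t := by
                by_contra hcon
                exact hmem2 (mem_ball_zero_iff.2 (by rw [hnorm]; linarith))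
              exact htI ⟨lt_of_le_of_ne h2 (Ne.symm hne), hmem1⟩
            rw [hΨdef]
            simp only [hz]
            exact lintegral_zero
          rw [hΨ0, mul_zero]
      calc ∫⁻ t in Set.Ioi (0:ℝ), ENNReal.ofReal (t ^ (n-1)) * Ψ t ∂(volume : Measure ℝ)
          ≤ ∫⁻ t in Set.Ioi (0:ℝ),
              (Set.Ioo r₀ sb).indicator (fun _ => ENNReal.ofReal (sb ^ (n-1)) * M) t
                ∂(volume : Measure ℝ) := lintegral_mono_ae hmono
        _ = (ENNReal.ofReal (sb ^ (n-1)) * M) *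
              (volume.restrict (Set.Ioi (0:ℝ))) (Set.Ioo r₀ sb) :=
            lintegral_indicator_const measurableSet_Ioo _
        _ ≤ (ENNReal.ofReal (sb ^ (n-1)) * M) * volume (Set.Ioo r₀ sb) := by
            gcongr
            exact Measure.restrict_le_self
      -- done
    refine lt_of_le_of_lt hfinal ?_
    refine ENNReal.mul_lt_top ?_ ?_
    · exact ENNReal.mul_lt_top ENNReal.ofReal_lt_top hMtop.lt_top
    · rw [Real.volume_Ioo]; exact ENNReal.ofReal_lt_top

  refine (h1.union h2).mono_set ?_
  intro x hx
  by_cases hxr : x ∈ Metric.ball (0 : EuclideanSpace ℝ (Fin n)) r₀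
  · exact Or.inl hxr
  · exact Or.inr ⟨hx, hxr⟩
end

section
/- Let b > 0 with b ≠ 2, let κ be an n×n real matrix, and let f be continuously differentiable on an open neighborhood of the closed ball of radius √b with f ≡ 0 on the boundary sphere ∂B. Fix p ∈ ∂B and define the flux J(m) = ( (b m f(m))/(2ρ(m)) + (1/2)∇f(m) − (κm) f(m) ) · (m/‖m‖) for m ∈ B \ {0}. If the limit L = lim_{t→0⁺} f((1−t)p)/(t√b) exists, then lim_{t→0⁺} J((1−t)p) = ((b−2)/4) · L. In particular, the zero-flux boundary condition lim_{t→0⁺} J((1−t)p) = 0 holds if and only if L = 0, i.e. if and only if f(m)/d(m) → 0 along the radius toward p. -/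
open Filter
open scoped Topology RealInnerProductSpace

set_option maxHeartbeats 1600000 in
/-- Let `b > 0`, `b ≠ 2`, let `κ` be an `n×n` real matrix, and let `f` be `C¹` on an
open neighborhood of the closed ball of radius `√b`, vanishing on the boundary sphere.
Fix `p ∈ ∂B` and let `J(m) = ((b m f)/(2ρ) + (1/2)∇f − (κm) f) · (m/‖m‖)` be the flux.
If `L = lim_{t→0⁺} f((1−t)p)/(t√b)` exists, then `lim_{t→0⁺} J((1−t)p) = ((b−2)/4)·L`;
in particular the zero-flux condition `lim_{t→0⁺} J((1−t)p) = 0` holds iff `L = 0`,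
i.e. iff `f/d → 0` along the radius toward `p`. -/
theorem flux_boundary_condition_equivalence
    (n : ℕ) (hn : 1 ≤ n) (b : ℝ) (hb : 0 < b) (hb2 : b ≠ 2)
    (κ : Matrix (Fin n) (Fin n) ℝ)
    (f : EuclideanSpace ℝ (Fin n) → ℝ) (U : Set (EuclideanSpace ℝ (Fin n)))
    (hU : IsOpen U)
    (hBU : Metric.closedBall (0 : EuclideanSpace ℝ (Fin n)) (Real.sqrt b) ⊆ U)
    (hf : ContDiffOn ℝ 1 f U)
    (hf0 : ∀ m ∈ Metric.sphere (0 : EuclideanSpace ℝ (Fin n)) (Real.sqrt b), f m = 0)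
    (p : EuclideanSpace ℝ (Fin n))
    (hp : p ∈ Metric.sphere (0 : EuclideanSpace ℝ (Fin n)) (Real.sqrt b))
    (J : EuclideanSpace ℝ (Fin n) → ℝ)
    (hJ : ∀ m : EuclideanSpace ℝ (Fin n),
      J m = ⟪(b * f m / (2 * (b - ‖m‖ ^ 2))) • m
              + (2 : ℝ)⁻¹ • gradient f m
              - f m • (Matrix.toEuclideanLin κ m),
            ‖m‖⁻¹ • m⟫)
    (L : ℝ)
    (hL : Filter.Tendsto (fun t : ℝ => f ((1 - t) • p) / (t * Real.sqrt b))
      (𝓝[>] 0) (𝓝 L)) :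
    Filter.Tendsto (fun t : ℝ => J ((1 - t) • p)) (𝓝[>] 0) (𝓝 ((b - 2) / 4 * L)) ∧
    (Filter.Tendsto (fun t : ℝ => J ((1 - t) • p)) (𝓝[>] 0) (𝓝 0) ↔ L = 0) := by
  set s := Real.sqrt b with hsdef
  have hs0 : 0 < s := Real.sqrt_pos.mpr hb
  have hss : s ^ 2 = b := Real.sq_sqrt hb.le
  have hpn : ‖p‖ = s := mem_sphere_zero_iff_norm.mp hp
  have hpU : p ∈ U := hBU (by simp [Metric.mem_closedBall, ← hpn, dist_zero_right])
  have hpp : ⟪p, p⟫ = b := by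
    rw [real_inner_self_eq_norm_sq, hpn, hss]
  have hfp : f p = 0 := hf0 p hp
  -- differentiability at p
  have hdiff : DifferentiableAt ℝ f p :=
    (hf.differentiableOn one_ne_zero).differentiableAt (hU.mem_nhds hpU)
  -- continuity of gradient at p
  have hgradcont : ContinuousAt (gradient f) p := by
    have h1 : ContinuousOn (fderiv ℝ f) U := hf.continuousOn_fderiv_of_isOpen hU le_rfl
    have h2 : ContinuousAt (fderiv ℝ f) p := h1.continuousAt (hU.mem_nhds hpU)
    exact ((InnerProductSpace.toDual ℝ
      (EuclideanSpace ℝ (Fin n))).symm.continuous.continuousAt).comp h2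
  -- the curve tends to p
  have hc : Tendsto (fun t : ℝ => (1 - t) • p) (𝓝[>] (0:ℝ)) (𝓝 p) := by
    have : Tendsto (fun t : ℝ => (1 - t) • p) (𝓝 (0:ℝ)) (𝓝 ((1 - (0:ℝ)) • p)) :=
      ((continuous_const.sub continuous_id).smul continuous_const).tendsto 0
    simpa using this.mono_left nhdsWithin_le_nhds
  -- derivative of t ↦ f((1-t)p) at 0
  have hcderiv : HasDerivAt (fun t : ℝ => (1 - t) • p) (-p) 0 := by
    have h1 : HasDerivAt (fun t : ℝ => p - t • p) ((0:EuclideanSpace ℝ (Fin n)) - (1:ℝ) • p) 0 :=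
      (hasDerivAt_const 0 p).sub ((hasDerivAt_id (0:ℝ)).smul_const p)
    have h2 : (fun t : ℝ => (1 - t) • p) = fun t : ℝ => p - t • p := by
      funext t; rw [sub_smul, one_smul]
    rw [h2]; simpa using h1
  have hF : HasFDerivAt f (fderiv ℝ f p) ((fun t : ℝ => (1 - t) • p) 0) := by
    simpa using hdiff.hasFDerivAt
  have hcomp : HasDerivAt (fun t : ℝ => f ((1 - t) • p)) (fderiv ℝ f p (-p)) 0 :=
    hF.comp_hasDerivAt 0 hcderiv
  -- slope limit
  have hslope : Tendsto (fun t : ℝ => f ((1 - t) • p) / t) (𝓝[>] (0:ℝ))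
      (𝓝 (fderiv ℝ f p (-p))) := by
    have h1 := hasDerivAt_iff_tendsto_slope.mp hcomp
    have h2 : 𝓝[>] (0:ℝ) ≤ 𝓝[≠] (0:ℝ) :=
      nhdsWithin_mono _ fun x hx => ne_of_gt hx
    refine (h1.mono_left h2).congr' ?_
    filter_upwards [self_mem_nhdsWithin] with t ht
    simp [slope_def_field, hfp]
  have hLs : Tendsto (fun t : ℝ => f ((1 - t) • p) / t) (𝓝[>] (0:ℝ)) (𝓝 (L * s)) := by
    refine (hL.mul_const s).congr' ?_
    filter_upwards [self_mem_nhdsWithin] with t ht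
    have ht0 : t ≠ 0 := ne_of_gt ht
    field_simp
  have hLu : fderiv ℝ f p (-p) = L * s := tendsto_nhds_unique hslope hLs
  have hgp : ⟪gradient f p, p⟫ = -(L * s) := by
    have h1 : ⟪gradient f p, p⟫ = fderiv ℝ f p p :=
      InnerProductSpace.toDual_symm_apply
    rw [map_neg] at hLu
    rw [h1]; linarith
  -- f((1-t)p) → 0
  have hfz : Tendsto (fun t : ℝ => f ((1 - t) • p)) (𝓝[>] (0:ℝ)) (𝓝 0) := by
    have hts : Tendsto (fun t : ℝ => t * s) (𝓝[>] (0:ℝ)) (𝓝 0) := by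
      have : Tendsto (fun t : ℝ => t * s) (𝓝 (0:ℝ)) (𝓝 (0 * s)) :=
        (continuous_id.mul continuous_const).tendsto 0
      simpa using this.mono_left nhdsWithin_le_nhds
    have := hL.mul hts
    rw [mul_zero] at this
    refine this.congr' ?_
    filter_upwards [self_mem_nhdsWithin] with t ht
    have ht0 : t ≠ 0 := ne_of_gt ht
    field_simp
  -- main eventual identity
  have hkey : ∀ t ∈ Set.Ioo (0:ℝ) 1,
      J ((1 - t) • p) =
        f ((1 - t) • p) / (t * s) * (b * (1 - t) / (2 * (2 - t)))
        + 2⁻¹ * (s⁻¹ * ⟪gradient f ((1 - t) • p), p⟫)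
        - f ((1 - t) • p) * ((1 - t) * (s⁻¹ * ⟪Matrix.toEuclideanLin κ p, p⟫)) := by
    intro t ht
    obtain ⟨ht0, ht1⟩ := ht
    have hnm : ‖(1 - t) • p‖ = (1 - t) * s := by
      rw [norm_smul, hpn, Real.norm_eq_abs, abs_of_pos (by linarith)]
    have hden : b - ((1 - t) * s) ^ 2 = b * (t * (2 - t)) := by
      rw [mul_pow, hss]; ring
    rw [hJ]
    have hκ : Matrix.toEuclideanLin κ ((1 - t) • p)
        = (1 - t) • Matrix.toEuclideanLin κ p := map_smul _ _ _
    rw [hκ]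
    generalize Matrix.toEuclideanLin κ p = w
    generalize gradient f ((1 - t) • p) = g
    generalize hFv : f ((1 - t) • p) = F
    simp only [inner_sub_left, inner_add_left, real_inner_smul_left, real_inner_smul_right]
    rw [hpp, hnm, hden]
    have h1t : (1 - t) ≠ 0 := by linarith
    have h2t : (2 - t) ≠ 0 := by linarith
    simp only [← hss]
    field_simp
  -- limit pieces
  have hfac : Tendsto (fun t : ℝ => b * (1 - t) / (2 * (2 - t))) (𝓝[>] (0:ℝ))
      (𝓝 (b / 4)) := by
    have hca : ContinuousAt (fun t : ℝ => b * (1 - t) / (2 * (2 - t))) 0 :=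
      ContinuousAt.div (by fun_prop) (by fun_prop) (by norm_num)
    have h2 : Tendsto (fun t : ℝ => b * (1 - t) / (2 * (2 - t))) (𝓝[>] (0:ℝ))
        (𝓝 (b * (1 - 0) / (2 * (2 - 0)))) := hca.tendsto.mono_left nhdsWithin_le_nhds
    norm_num at h2
    exact h2
  have T1 : Tendsto (fun t : ℝ => f ((1 - t) • p) / (t * s) * (b * (1 - t) / (2 * (2 - t))))
      (𝓝[>] (0:ℝ)) (𝓝 (L * (b / 4))) := hL.mul hfac
  have T2 : Tendsto (fun t : ℝ => 2⁻¹ * (s⁻¹ * ⟪gradient f ((1 - t) • p), p⟫))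
      (𝓝[>] (0:ℝ)) (𝓝 (2⁻¹ * (s⁻¹ * -(L * s)))) := by
    have hg : Tendsto (fun t : ℝ => gradient f ((1 - t) • p)) (𝓝[>] (0:ℝ))
        (𝓝 (gradient f p)) := hgradcont.tendsto.comp hc
    have hinner : Tendsto (fun t : ℝ => ⟪gradient f ((1 - t) • p), p⟫) (𝓝[>] (0:ℝ))
        (𝓝 (⟪gradient f p, p⟫)) := hg.inner tendsto_const_nhds
    rw [hgp] at hinner
    exact (tendsto_const_nhds.mul (tendsto_const_nhds.mul hinner)).congr (fun t => rfl)
  have T3 : Tendsto (fun t : ℝ =>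
      f ((1 - t) • p) * ((1 - t) * (s⁻¹ * ⟪Matrix.toEuclideanLin κ p, p⟫)))
      (𝓝[>] (0:ℝ)) (𝓝 0) := by
    have h2 : Tendsto (fun t : ℝ => (1 - t) * (s⁻¹ * ⟪Matrix.toEuclideanLin κ p, p⟫))
        (𝓝[>] (0:ℝ)) (𝓝 ((1 - 0) * (s⁻¹ * ⟪Matrix.toEuclideanLin κ p, p⟫))) := by
      exact Tendsto.mono_left
        (((continuous_const.sub continuous_id).mul continuous_const).tendsto 0)
        nhdsWithin_le_nhds
    have h3 := hfz.mul h2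
    rw [zero_mul] at h3
    exact h3
  have hval : L * (b / 4) + 2⁻¹ * (s⁻¹ * -(L * s)) - 0 = (b - 2) / 4 * L := by
    have h4 : s⁻¹ * -(L * s) = -L := by
      field_simp
    rw [h4]
    ring
  have hmain : Tendsto (fun t : ℝ => J ((1 - t) • p)) (𝓝[>] (0:ℝ))
      (𝓝 ((b - 2) / 4 * L)) := by
    rw [← hval]
    refine ((T1.add T2).sub T3).congr' ?_
    filter_upwards [Ioo_mem_nhdsGT_of_mem (Set.mem_Ico.mpr ⟨le_refl 0, one_pos⟩)] with t ht
    exact (hkey t ht).symm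
  refine ⟨hmain, ?_, fun h => by simpa [h] using hmain⟩
  intro h0
  have := tendsto_nhds_unique hmain h0
  have hb4 : (b - 2) / 4 ≠ 0 := by
    intro h; apply hb2; field_simp at h; linarith
  exact (mul_eq_zero.mp this).resolve_left hb4
end

section
/- Assume b > 2 and let M ≥ 0. There exist real numbers α and K with 0 < α < b/2 − 1 such that for every m in the closed ball of radius √b and every n×n real matrix κ with operator norm at most M, c(m) = −K ρ(m)² + α[ n b + (2α + 2 − n − b)‖m‖² ] + (b − 2α) ρ(m) (m·κm) < 0. -/
open scoped RealInnerProductSpace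

set_option maxHeartbeats 1000000

/-- For `b > 2` and `M ≥ 0` there exist `α`, `K` with `0 < α < b/2 − 1` such that for
every `m` in the closed ball of radius `√b` and every matrix `κ` of operator norm at
most `M`, the zeroth-order coefficient
`c(m) = −K ρ² + α[nb + (2α + 2 − n − b)‖m‖²] + (b − 2α) ρ (m·κm)` is negative, where
`ρ(m) = b − ‖m‖²`. This negativity enables the maximum-principle argument for
positivity of solutions. -/
theorem exists_alpha_K_negative_coefficient
    (n : ℕ) (hn : 1 ≤ n) (b : ℝ) (hb : 2 < b) (M : ℝ) (hM : 0 ≤ M) :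
    ∃ α K : ℝ, 0 < α ∧ α < b / 2 - 1 ∧
      ∀ m ∈ Metric.closedBall (0 : EuclideanSpace ℝ (Fin n)) (Real.sqrt b),
        ∀ κ : Matrix (Fin n) (Fin n) ℝ, ‖Matrix.toEuclideanCLM (𝕜 := ℝ) κ‖ ≤ M →
          -K * (b - ‖m‖ ^ 2) ^ 2
            + α * ((n : ℝ) * b + (2 * α + 2 - (n : ℝ) - b) * ‖m‖ ^ 2)
            + (b - 2 * α) * (b - ‖m‖ ^ 2) * ⟪m, Matrix.toEuclideanLin κ m⟫ < 0 := by
  set α : ℝ := (b - 2) / 4 with hα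
  set δ : ℝ := (b - 2) ^ 2 * b / 8 with hδ
  set C : ℝ := α * ((n : ℝ) + b) + b ^ 2 * M + 1 with hC
  have hb0 : (0 : ℝ) < b := by linarith
  have hδpos : 0 < δ := by
    have h1 : (0:ℝ) < (b - 2) ^ 2 := pow_pos (by linarith) 2
    rw [hδ]; nlinarith [mul_pos h1 hb0]
  have hCpos : 0 < C := by
    have hn1 : (1 : ℝ) ≤ (n : ℝ) := by exact_mod_cast hn
    have : 0 ≤ α := by rw [hα]; linarith
    nlinarith
  refine ⟨α, C ^ 2 / (2 * δ), by rw [hα]; linarith, by rw [hα]; linarith, ?_⟩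
  intro m hm κ hκ
  set K : ℝ := C ^ 2 / (2 * δ) with hK
  have hKpos : 0 < K := by rw [hK]; positivity
  have hKδ : 2 * K * δ = C ^ 2 := by
    rw [hK]; field_simp
  clear_value K C δ α
  -- ‖m‖² ≤ b
  have hm' : ‖m‖ ≤ Real.sqrt b := by
    simpa using Metric.mem_closedBall.mp hm
  have hs : ‖m‖ ^ 2 ≤ b := by
    have := Real.sq_sqrt hb0.le
    nlinarith [norm_nonneg m, Real.sqrt_nonneg b]
  set s : ℝ := ‖m‖ ^ 2 with hsdef
  have hs0 : 0 ≤ s := by positivity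
  -- inner product bound
  have hI : |⟪m, Matrix.toEuclideanLin κ m⟫| ≤ M * s := by
    have heq : Matrix.toEuclideanLin κ m = Matrix.toEuclideanCLM (𝕜 := ℝ) κ m := by
      rw [← Matrix.coe_toEuclideanCLM_eq_toEuclideanLin]; rfl
    rw [heq]
    calc |⟪m, Matrix.toEuclideanCLM (𝕜 := ℝ) κ m⟫|
        ≤ ‖m‖ * ‖Matrix.toEuclideanCLM (𝕜 := ℝ) κ m‖ := abs_real_inner_le_norm _ _
      _ ≤ ‖m‖ * (‖Matrix.toEuclideanCLM (𝕜 := ℝ) κ‖ * ‖m‖) := by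
          gcongr; exact ContinuousLinearMap.le_opNorm _ _
      _ ≤ ‖m‖ * (M * ‖m‖) := by gcongr
      _ = M * s := by rw [hsdef]; ring
  have hI' : ⟪m, Matrix.toEuclideanLin κ m⟫ ≤ M * s := (abs_le.mp hI).2
  set I : ℝ := ⟪m, Matrix.toEuclideanLin κ m⟫ with hIdef
  clear_value s I
  have hρ0 : 0 ≤ b - s := by linarith
  have hαpos : 0 < α := by rw [hα]; linarith
  have hbα : 0 < b - 2 * α := by rw [hα]; linarith
  have hbα' : b - 2 * α ≤ b := by rw [hα]; linarith
  have hMs : M * s ≤ M * b := by nlinarith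
  have hMs0 : 0 ≤ M * s := mul_nonneg hM hs0
  -- bound the inner product term
  have h1 : (b - 2 * α) * (b - s) * I ≤ (b - 2 * α) * (b - s) * (M * s) :=
    mul_le_mul_of_nonneg_left hI' (mul_nonneg hbα.le hρ0)
  have h3 : (b - 2 * α) * (M * s) ≤ b * (M * b) := mul_le_mul hbα' hMs hMs0 hb0.le
  have h2 := mul_le_mul_of_nonneg_left h3 hρ0
  have hterm : (b - 2 * α) * (b - s) * I ≤ b ^ 2 * M * (b - s) := by nlinarith [h1, h2]
  -- algebraic identity
  have hid : α * ((n : ℝ) * b + (2 * α + 2 - (n : ℝ) - b) * s) + b ^ 2 * M * (b - s)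
      = -δ + C * (b - s) - (1 + α * (2 * α + 2)) * (b - s) := by
    rw [hC, hδ, hα]; ring
  have hslack : 0 ≤ (1 + α * (2 * α + 2)) * (b - s) := by
    have h4 : (0:ℝ) ≤ α * (2 * α + 2) := mul_nonneg hαpos.le (by linarith)
    exact mul_nonneg (by linarith) hρ0
  -- quadratic bound
  have q1 : -K * (b - s) ^ 2 + C * (b - s) - δ < 0 := by
    nlinarith [sq_nonneg (K * (b - s) - C / 2), hKδ, hKpos, hCpos, mul_pos hKpos hδpos,
      mul_pos hCpos hCpos]
  linarith [hterm, hid, hslack, q1]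
end

section
/- Let b ∈ ℝ, T > 0, and let κ be an n×n real matrix with trace zero. Let w : (0,T) × B → ℝ be continuously differentiable in t and twice continuously differentiable in m, and set f(t,m) = w(t,m) ρ(m) and c(m) = 2 m·κm + n(b/2 − 1). Then at every (t,m) ∈ (0,T) × B, ∂_t f + ∇·((κm) f) − (1/2)∇·((b m/ρ) f) − (1/2)Δf = ρ [ ∂_t w − (1/2)Δw − ((b−4)m − 2ρ κm)/(2ρ) · ∇w − (c/ρ) w ]. -/
open MeasureTheory
open scoped RealInnerProductSpace

/-- The divergence of a vector field on Euclidean space. -/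
noncomputable def vdiv {n : ℕ}
    (F : EuclideanSpace ℝ (Fin n) → EuclideanSpace ℝ (Fin n))
    (m : EuclideanSpace ℝ (Fin n)) : ℝ :=
  ∑ i, ⟪fderiv ℝ F m (EuclideanSpace.single i 1), EuclideanSpace.single i 1⟫

/-- The Laplacian of a scalar field on Euclidean space. -/
noncomputable def lap {n : ℕ}
    (g : EuclideanSpace ℝ (Fin n) → ℝ) (m : EuclideanSpace ℝ (Fin n)) : ℝ :=
  vdiv (gradient g) m

namespace FPaux

variable {n : ℕ}

lemma inner_grad (g : EuclideanSpace ℝ (Fin n) → ℝ) (x v : EuclideanSpace ℝ (Fin n)) :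
    ⟪gradient g x, v⟫ = fderiv ℝ g x v :=
  InnerProductSpace.toDual_symm_apply

lemma sum_apply_mul (ℓ : EuclideanSpace ℝ (Fin n) →L[ℝ] ℝ) (u : EuclideanSpace ℝ (Fin n)) :
    ∑ i, ℓ (EuclideanSpace.single i 1) * u i = ℓ u := by
  conv_rhs => rw [← (EuclideanSpace.basisFun (Fin n) ℝ).sum_repr u]
  rw [map_sum]
  refine Finset.sum_congr rfl fun i _ => ?_
  rw [EuclideanSpace.basisFun_repr, EuclideanSpace.basisFun_apply, ℓ.map_smul]
  simp [mul_comm]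

lemma vdiv_congr {F G : EuclideanSpace ℝ (Fin n) → EuclideanSpace ℝ (Fin n)}
    {m : EuclideanSpace ℝ (Fin n)} (h : F =ᶠ[nhds m] G) : vdiv F m = vdiv G m := by
  unfold vdiv; rw [h.fderiv_eq]

lemma vdiv_eq {F : EuclideanSpace ℝ (Fin n) → EuclideanSpace ℝ (Fin n)}
    {D : EuclideanSpace ℝ (Fin n) →L[ℝ] EuclideanSpace ℝ (Fin n)}
    {m : EuclideanSpace ℝ (Fin n)} (h : HasFDerivAt F D m) :
    vdiv F m = ∑ i, (D (EuclideanSpace.single i 1)) i := by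
  unfold vdiv; rw [h.fderiv]
  refine Finset.sum_congr rfl fun i _ => ?_
  simp [EuclideanSpace.inner_single_right]

lemma hasFDerivAt_rho (b : ℝ) (x : EuclideanSpace ℝ (Fin n)) :
    HasFDerivAt (fun y : EuclideanSpace ℝ (Fin n) => b - ‖y‖ ^ 2)
      ((-2 : ℝ) • (innerSL ℝ x)) x := by
  have h1 := (hasFDerivAt_id x).inner ℝ (hasFDerivAt_id x)
  have h2 := (hasFDerivAt_const b x).sub h1
  have h3 : HasFDerivAt (fun y : EuclideanSpace ℝ (Fin n) => b - ‖y‖ ^ 2)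
      (0 - (fderivInnerCLM ℝ (x, x)).comp
        ((ContinuousLinearMap.id ℝ (EuclideanSpace ℝ (Fin n))).prod
          (ContinuousLinearMap.id ℝ (EuclideanSpace ℝ (Fin n))))) x := by
    simpa only [id, real_inner_self_eq_norm_sq, Pi.sub_def] using h2
  refine h3.congr_fderiv ?_
  ext v
  simp only [ContinuousLinearMap.smul_apply, ContinuousLinearMap.zero_apply,
    ContinuousLinearMap.sub_apply, ContinuousLinearMap.comp_apply,
    ContinuousLinearMap.prod_apply, ContinuousLinearMap.id_apply,
    fderivInnerCLM_apply, innerSL_apply_apply, smul_eq_mul, zero_sub,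
    ContinuousLinearMap.neg_apply]
  rw [real_inner_comm x v]
  ring

lemma sum_diag (κ : Matrix (Fin n) (Fin n) ℝ) :
    ∑ i, (Matrix.toEuclideanLin κ (EuclideanSpace.single i 1)) i = Matrix.trace κ := by
  rw [Matrix.trace]
  refine Finset.sum_congr rfl fun i _ => ?_
  have : Matrix.toEuclideanLin κ (EuclideanSpace.single i 1)
      = (WithLp.equiv 2 (Fin n → ℝ)).symm (Matrix.mulVec κ (Pi.single i 1)) := by
    rfl
  rw [this]
  simp [Matrix.diag_apply, WithLp.equiv_symm_apply, PiLp.toLp_apply]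

lemma sum_smulRight (ℓ : EuclideanSpace ℝ (Fin n) →L[ℝ] ℝ) (u : EuclideanSpace ℝ (Fin n)) :
    ∑ i, ((ℓ.smulRight u) (EuclideanSpace.single i 1)) i = ℓ u := by
  simp only [ContinuousLinearMap.smulRight_apply, PiLp.smul_apply, smul_eq_mul]
  exact sum_apply_mul ℓ u

lemma sum_add (D1 D2 : EuclideanSpace ℝ (Fin n) →L[ℝ] EuclideanSpace ℝ (Fin n)) :
    ∑ i, ((D1 + D2) (EuclideanSpace.single i 1)) i
      = (∑ i, (D1 (EuclideanSpace.single i 1)) i) + ∑ i, (D2 (EuclideanSpace.single i 1)) i := by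
  simp only [ContinuousLinearMap.add_apply, PiLp.add_apply]
  exact Finset.sum_add_distrib

lemma sum_smul (c : ℝ) (D : EuclideanSpace ℝ (Fin n) →L[ℝ] EuclideanSpace ℝ (Fin n)) :
    ∑ i, ((c • D) (EuclideanSpace.single i 1)) i
      = c * ∑ i, (D (EuclideanSpace.single i 1)) i := by
  simp only [ContinuousLinearMap.smul_apply, PiLp.smul_apply, smul_eq_mul, Finset.mul_sum]

lemma sum_id : ∑ i, ((ContinuousLinearMap.id ℝ (EuclideanSpace ℝ (Fin n)))
    (EuclideanSpace.single i 1)) i = (n : ℝ) := by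
  simp [EuclideanSpace.single_apply]

end FPaux

set_option maxHeartbeats 2000000 in
open FPaux in
/-- Transformation identity: if `f = w ρ` with `ρ(m) = b − ‖m‖²`, `κ` a trace-free
matrix, and `c(m) = 2 m·κm + n(b/2 − 1)`, then on `(0,T) × B` the Fokker–Planck
operator applied to `f` equals
`ρ [ ∂_t w − (1/2)Δw − ((b−4)m − 2ρκm)/(2ρ)·∇w − (c/ρ) w ]`. -/
theorem fokker_planck_transformation_rho
    (n : ℕ) (hn : 1 ≤ n) (b T : ℝ) (hT : 0 < T)
    (κ : Matrix (Fin n) (Fin n) ℝ) (hκ : Matrix.trace κ = 0)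
    (w : ℝ → EuclideanSpace ℝ (Fin n) → ℝ)
    (hwt : ∀ m ∈ Metric.ball (0 : EuclideanSpace ℝ (Fin n)) (Real.sqrt b),
      ContDiffOn ℝ 1 (fun s => w s m) (Set.Ioo 0 T))
    (hwm : ∀ t ∈ Set.Ioo (0 : ℝ) T,
      ContDiffOn ℝ 2 (w t) (Metric.ball (0 : EuclideanSpace ℝ (Fin n)) (Real.sqrt b))) :
    ∀ t ∈ Set.Ioo (0 : ℝ) T,
      ∀ m ∈ Metric.ball (0 : EuclideanSpace ℝ (Fin n)) (Real.sqrt b),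
        deriv (fun s => w s m * (b - ‖m‖ ^ 2)) t
          + vdiv (fun x => (w t x * (b - ‖x‖ ^ 2)) • Matrix.toEuclideanLin κ x) m
          - (1 / 2) * vdiv (fun x =>
              (b * (w t x * (b - ‖x‖ ^ 2)) / (b - ‖x‖ ^ 2)) • x) m
          - (1 / 2) * lap (fun x => w t x * (b - ‖x‖ ^ 2)) m
        = (b - ‖m‖ ^ 2) *
            (deriv (fun s => w s m) t
              - (1 / 2) * lap (w t) m
              - ⟪(b - 4) • m - (2 * (b - ‖m‖ ^ 2)) • Matrix.toEuclideanLin κ m,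
                  gradient (w t) m⟫ / (2 * (b - ‖m‖ ^ 2))
              - ((2 * ⟪m, Matrix.toEuclideanLin κ m⟫ + (n : ℝ) * (b / 2 - 1))
                  / (b - ‖m‖ ^ 2)) * w t m) := by
  intro t ht m hm
  classical
  have hmb : ‖m‖ < Real.sqrt b := by
    simpa [dist_eq_norm] using hm
  have hb : 0 < b := Real.sqrt_pos.mp (lt_of_le_of_lt (norm_nonneg m) hmb)
  have hρpos : ∀ x ∈ Metric.ball (0 : EuclideanSpace ℝ (Fin n)) (Real.sqrt b),
      0 < b - ‖x‖ ^ 2 := by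
    intro x hx
    have hxb : ‖x‖ < Real.sqrt b := by simpa [dist_eq_norm] using hx
    have h2 : ‖x‖ ^ 2 < Real.sqrt b ^ 2 := by
      exact pow_lt_pow_left₀ hxb (norm_nonneg x) two_ne_zero
    rw [Real.sq_sqrt hb.le] at h2
    linarith
  have hρm0 : b - ‖m‖ ^ 2 ≠ 0 := ne_of_gt (hρpos m hm)
  have hw2 : ∀ x ∈ Metric.ball (0 : EuclideanSpace ℝ (Fin n)) (Real.sqrt b),
      ContDiffAt ℝ 2 (w t) x :=
    fun x hx => (hwm t ht).contDiffAt (Metric.isOpen_ball.mem_nhds hx)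
  have hw1 : ∀ x ∈ Metric.ball (0 : EuclideanSpace ℝ (Fin n)) (Real.sqrt b),
      DifferentiableAt ℝ (w t) x :=
    fun x hx => (hw2 x hx).differentiableAt (by norm_num)
  -- Term A : time derivative
  have hA : deriv (fun s => w s m * (b - ‖m‖ ^ 2)) t
      = deriv (fun s => w s m) t * (b - ‖m‖ ^ 2) := by
    have hdt : DifferentiableAt ℝ (fun s => w s m) t :=
      ((hwt m hm).contDiffAt (isOpen_Ioo.mem_nhds ht)).differentiableAt one_ne_zero
    exact deriv_mul_const hdt _
  -- Term B : divergence of (f • κ x)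
  have hLf : HasFDerivAt (fun x : EuclideanSpace ℝ (Fin n) => Matrix.toEuclideanLin κ x)
      (LinearMap.toContinuousLinearMap (Matrix.toEuclideanLin κ)) m := by
    simpa using (LinearMap.toContinuousLinearMap (Matrix.toEuclideanLin κ)).hasFDerivAt
  have hfm : HasFDerivAt (fun x => w t x * (b - ‖x‖ ^ 2))
      ((w t m) • ((-2 : ℝ) • (innerSL ℝ m)) + (b - ‖m‖ ^ 2) • fderiv ℝ (w t) m) m :=
    ((hw1 m hm).hasFDerivAt).mul (hasFDerivAt_rho b m)
  have hB : vdiv (fun x => (w t x * (b - ‖x‖ ^ 2)) • Matrix.toEuclideanLin κ x) m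
      = w t m * (-2 * ⟪m, Matrix.toEuclideanLin κ m⟫)
        + (b - ‖m‖ ^ 2) * fderiv ℝ (w t) m (Matrix.toEuclideanLin κ m) := by
    rw [vdiv_eq (F := fun x => (w t x * (b - ‖x‖ ^ 2)) • Matrix.toEuclideanLin κ x)
      (hfm.smul hLf), sum_add, sum_smul, sum_smulRight]
    have hdiag : ∑ i, ((LinearMap.toContinuousLinearMap (Matrix.toEuclideanLin κ))
        (EuclideanSpace.single i 1)) i = (0 : ℝ) := by
      have := sum_diag κ
      simpa [hκ] using this
    rw [hdiag, mul_zero, zero_add]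
    simp [innerSL_apply_apply]
  -- Term C : divergence of the drift field
  have hEq2 : (fun x : EuclideanSpace ℝ (Fin n) =>
        (b * (w t x * (b - ‖x‖ ^ 2)) / (b - ‖x‖ ^ 2)) • x)
      =ᶠ[nhds m] (fun x => (b * w t x) • x) := by
    filter_upwards [Metric.isOpen_ball.mem_nhds hm] with x hx
    have h0 : b - ‖x‖ ^ 2 ≠ 0 := ne_of_gt (hρpos x hx)
    congr 1
    field_simp
  have hG : HasFDerivAt (fun x : EuclideanSpace ℝ (Fin n) => (b * w t x) • x)
      ((b * w t m) • ContinuousLinearMap.id ℝ (EuclideanSpace ℝ (Fin n))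
        + ((b : ℝ) • fderiv ℝ (w t) m).smulRight m) m :=
    (((hw1 m hm).hasFDerivAt).const_mul b).smul (hasFDerivAt_id m)
  have hC : vdiv (fun x => (b * (w t x * (b - ‖x‖ ^ 2)) / (b - ‖x‖ ^ 2)) • x) m
      = b * w t m * n + b * fderiv ℝ (w t) m m := by
    rw [vdiv_congr hEq2, vdiv_eq hG, sum_add, sum_smul, sum_id, sum_smulRight]
    simp
  -- Term D : Laplacian of f
  have hgradEq : gradient (fun x => w t x * (b - ‖x‖ ^ 2))
      =ᶠ[nhds m] (fun x => (b - ‖x‖ ^ 2) • gradient (w t) x + (-2 * w t x) • x) := by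
    filter_upwards [Metric.isOpen_ball.mem_nhds hm] with x hx
    have hfx : HasFDerivAt (fun y => w t y * (b - ‖y‖ ^ 2))
        ((w t x) • ((-2 : ℝ) • innerSL ℝ x) + (b - ‖x‖ ^ 2) • fderiv ℝ (w t) x) x :=
      ((hw1 x hx).hasFDerivAt).mul (hasFDerivAt_rho b x)
    refine ext_inner_right ℝ fun v => ?_
    rw [inner_grad, hfx.fderiv, inner_add_left, real_inner_smul_left, real_inner_smul_left,
      inner_grad]
    simp [innerSL_apply_apply]
    ring
  have hgc : ContDiffAt ℝ 1 (fderiv ℝ (w t)) m :=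
    (hw2 m hm).fderiv_right (le_refl 2)
  have hgdiff : DifferentiableAt ℝ (gradient (w t)) m := by
    have heq : gradient (w t) = fun x =>
        (InnerProductSpace.toDual ℝ (EuclideanSpace ℝ (Fin n))).symm (fderiv ℝ (w t) x) := rfl
    rw [heq]
    exact ((InnerProductSpace.toDual ℝ
      (EuclideanSpace ℝ (Fin n))).symm.toContinuousLinearEquiv.differentiableAt).comp m
      (hgc.differentiableAt one_ne_zero)
  have hH : HasFDerivAt
      (fun x => (b - ‖x‖ ^ 2) • gradient (w t) x + (-2 * w t x) • x)
      ( ((b - ‖m‖ ^ 2) • fderiv ℝ (gradient (w t)) m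
          + ((-2 : ℝ) • innerSL ℝ m).smulRight (gradient (w t) m))
        + ((-2 * w t m) • ContinuousLinearMap.id ℝ (EuclideanSpace ℝ (Fin n))
          + ((-2 : ℝ) • fderiv ℝ (w t) m).smulRight m)) m :=
    ((hasFDerivAt_rho b m).smul hgdiff.hasFDerivAt).add
      ((((hw1 m hm).hasFDerivAt).const_mul (-2)).smul (hasFDerivAt_id m))
  have hlapw : lap (w t) m
      = ∑ i, (fderiv ℝ (gradient (w t)) m (EuclideanSpace.single i 1)) i := by
    unfold lap vdiv
    exact Finset.sum_congr rfl fun i _ => by simp [EuclideanSpace.inner_single_right]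
  have hD : lap (fun x => w t x * (b - ‖x‖ ^ 2)) m
      = (b - ‖m‖ ^ 2) * lap (w t) m - 2 * ⟪m, gradient (w t) m⟫
        - 2 * w t m * n - 2 * fderiv ℝ (w t) m m := by
    show vdiv (gradient (fun x => w t x * (b - ‖x‖ ^ 2))) m = _
    rw [vdiv_congr hgradEq, vdiv_eq hH, sum_add, sum_add, sum_add, sum_smul, sum_smul,
      sum_smulRight, sum_smulRight, sum_id, ← hlapw]
    simp [innerSL_apply_apply]
    ring
  -- Put everything together
  rw [hA, hB, hC, hD]
  have hgm : ⟪m, gradient (w t) m⟫ = fderiv ℝ (w t) m m := by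
    rw [real_inner_comm, inner_grad]
  have hgLm : ⟪Matrix.toEuclideanLin κ m, gradient (w t) m⟫
      = fderiv ℝ (w t) m (Matrix.toEuclideanLin κ m) := by
    rw [real_inner_comm, inner_grad]
  rw [inner_sub_left, real_inner_smul_left, real_inner_smul_left, hgLm, hgm]
  field_simp
  ring
end

section
/- Let b ∈ ℝ, T > 0, α, K ∈ ℝ, and let κ be an n×n real matrix with trace zero. Let w : (0,T) × B → ℝ be continuously differentiable in t and twice continuously differentiable in m, and set f(t,m) = w(t,m) ρ(m)^{b/2−α} e^{Kt} and c(m) = −K ρ(m)² + α[ n b + (2α + 2 − n − b)‖m‖² ] + (b − 2α) ρ(m)(m·κm). Then at every (t,m) ∈ (0,T) × B, e^{−Kt} ρ(m)^{α − b/2 + 2} [ ∂_t f + ∇·((κm) f) − (1/2)∇·((b m/ρ) f) − (1/2)Δf ] = ρ² ∂_t w − (1/2) ρ² Δw − ρ [ ((4α − b)/2) m − ρ κm ] · ∇w − c(m) w. In particular, f solves the Fokker–Planck equation on (0,T)×B if and only if w solves the transformed equation ρ²∂_t w − (1/2)ρ²Δw − ρ[((4α−b)/2)m − ρκm]·∇w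 − c(m)w = 0 there. -/
open MeasureTheory
open scoped RealInnerProductSpace

section Helpers

variable {n : ℕ}

lemma fderiv_eq_inner_gradient {a : EuclideanSpace ℝ (Fin n) → ℝ}
    {m v : EuclideanSpace ℝ (Fin n)} (h : DifferentiableAt ℝ a m) :
    fderiv ℝ a m v = ⟪gradient a m, v⟫ := by
  rw [h.hasGradientAt.hasFDerivAt.fderiv]
  exact InnerProductSpace.toDual_apply_apply

lemma inner_single (u : EuclideanSpace ℝ (Fin n)) (i : Fin n) :
    ⟪u, EuclideanSpace.single i 1⟫ = u i := by
  simp [EuclideanSpace.inner_single_right]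

lemma sum_inner_single (u v : EuclideanSpace ℝ (Fin n)) :
    ∑ i, ⟪u, EuclideanSpace.single i 1⟫ * ⟪v, EuclideanSpace.single i 1⟫ = ⟪u, v⟫ := by
  simp only [inner_single]
  rw [PiLp.inner_apply]
  simp [mul_comm]

lemma vdiv_smul {a : EuclideanSpace ℝ (Fin n) → ℝ}
    {F : EuclideanSpace ℝ (Fin n) → EuclideanSpace ℝ (Fin n)}
    {m : EuclideanSpace ℝ (Fin n)} (ha : DifferentiableAt ℝ a m)
    (hF : DifferentiableAt ℝ F m) :
    vdiv (fun x => a x • F x) m = ⟪gradient a m, F m⟫ + a m * vdiv F m := by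
  have h := fderiv_fun_smul ha hF
  unfold vdiv
  rw [h]
  simp only [ContinuousLinearMap.add_apply, ContinuousLinearMap.smul_apply,
    ContinuousLinearMap.smulRight_apply, inner_add_left, inner_smul_left,
    real_inner_smul_left, RCLike.star_def, conj_trivial]
  rw [Finset.sum_add_distrib, add_comm, Finset.mul_sum]
  congr 1
  · rw [← sum_inner_single (gradient a m) (F m)]
    congr 1; ext i
    rw [fderiv_eq_inner_gradient ha]

lemma vdiv_add {F G : EuclideanSpace ℝ (Fin n) → EuclideanSpace ℝ (Fin n)}
    {m : EuclideanSpace ℝ (Fin n)} (hF : DifferentiableAt ℝ F m)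
    (hG : DifferentiableAt ℝ G m) :
    vdiv (fun x => F x + G x) m = vdiv F m + vdiv G m := by
  unfold vdiv
  rw [fderiv_fun_add hF hG]
  simp [inner_add_left, Finset.sum_add_distrib]

lemma vdiv_id (m : EuclideanSpace ℝ (Fin n)) : vdiv (fun x => x) m = n := by
  unfold vdiv
  have : fderiv ℝ (fun x : EuclideanSpace ℝ (Fin n) => x) m = ContinuousLinearMap.id ℝ _ :=
    fderiv_id
  rw [this]
  simp [inner_single]

lemma vdiv_toEuclideanLin (κ : Matrix (Fin n) (Fin n) ℝ) (m : EuclideanSpace ℝ (Fin n)) :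
    vdiv (fun x => Matrix.toEuclideanLin κ x) m = Matrix.trace κ := by
  unfold vdiv
  have h : (fun x : EuclideanSpace ℝ (Fin n) => Matrix.toEuclideanLin κ x)
      = (Matrix.toEuclideanLin κ).toContinuousLinearMap := rfl
  rw [h, ContinuousLinearMap.fderiv]
  simp only [LinearMap.coe_toContinuousLinearMap', inner_single]
  rw [Matrix.trace]
  congr 1; ext i
  simp [Matrix.toEuclideanLin_apply, Matrix.mulVec, dotProduct,
    EuclideanSpace.single_apply, Matrix.diag]

lemma diffAt_toEuclideanLin (κ : Matrix (Fin n) (Fin n) ℝ) (m : EuclideanSpace ℝ (Fin n)) :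
    DifferentiableAt ℝ (fun x => Matrix.toEuclideanLin κ x) m :=
  (Matrix.toEuclideanLin κ).toContinuousLinearMap.differentiableAt

lemma hasGradientAt_of_hasFDerivAt {f : EuclideanSpace ℝ (Fin n) → ℝ}
    {L : EuclideanSpace ℝ (Fin n) →L[ℝ] ℝ} {g x : EuclideanSpace ℝ (Fin n)}
    (h : HasFDerivAt f L x) (hL : ∀ v, L v = ⟪g, v⟫) : HasGradientAt f g x := by
  have he : L = InnerProductSpace.toDual ℝ _ g := by
    ext v; rw [hL]; simp [InnerProductSpace.toDual_apply_apply]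
  rw [hasGradientAt_iff_hasFDerivAt, ← he]; exact h

lemma hasGradientAt_mul_rpow {u : EuclideanSpace ℝ (Fin n) → ℝ}
    {x : EuclideanSpace ℝ (Fin n)} {b : ℝ} (β C : ℝ) (hu : DifferentiableAt ℝ u x)
    (hρ : b - ‖x‖ ^ 2 ≠ 0) :
    HasGradientAt (fun y => u y * (b - ‖y‖ ^ 2) ^ β * C)
      (((b - ‖x‖ ^ 2) ^ β * C) • gradient u x
        + ((-2 * β) * (b - ‖x‖ ^ 2) ^ (β - 1) * u x * C) • x) x := by
  have hρx : HasFDerivAt (fun y : EuclideanSpace ℝ (Fin n) => b - ‖y‖ ^ 2)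
      ((0 : EuclideanSpace ℝ (Fin n) →L[ℝ] ℝ) - 2 • innerSL ℝ x) x :=
    (hasFDerivAt_const b x).sub (hasStrictFDerivAt_norm_sq x).hasFDerivAt
  have hφ := (Real.hasDerivAt_rpow_const (p := β) (Or.inl hρ)).comp_hasFDerivAt x hρx
  have hg := (hu.hasFDerivAt.mul hφ).mul_const C
  apply hasGradientAt_of_hasFDerivAt hg
  intro v
  simp only [Function.comp_apply, ContinuousLinearMap.smul_apply,
    ContinuousLinearMap.add_apply, ContinuousLinearMap.sub_apply,
    ContinuousLinearMap.zero_apply, innerSL_apply_apply, ContinuousLinearMap.coe_smul',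
    Pi.smul_apply, smul_eq_mul, inner_add_left, real_inner_smul_left,
    fderiv_eq_inner_gradient hu]
  simp only [nsmul_eq_mul, Nat.cast_ofNat]
  ring

lemma hasGradientAt_bdiv {g : EuclideanSpace ℝ (Fin n) → ℝ}
    {Gg x : EuclideanSpace ℝ (Fin n)} {b : ℝ} (hg : HasGradientAt g Gg x)
    (hρ : b - ‖x‖ ^ 2 ≠ 0) :
    HasGradientAt (fun y => b * g y / (b - ‖y‖ ^ 2))
      ((b / (b - ‖x‖ ^ 2)) • Gg
        + (2 * b * g x / (b - ‖x‖ ^ 2) ^ 2) • x) x := by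
  have hρx : HasFDerivAt (fun y : EuclideanSpace ℝ (Fin n) => b - ‖y‖ ^ 2)
      ((0 : EuclideanSpace ℝ (Fin n) →L[ℝ] ℝ) - 2 • innerSL ℝ x) x :=
    (hasFDerivAt_const b x).sub (hasStrictFDerivAt_norm_sq x).hasFDerivAt
  have hinv := (hasDerivAt_inv hρ).comp_hasFDerivAt x hρx
  have hmul := (hg.hasFDerivAt.const_mul b).mul hinv
  have hdiv : HasFDerivAt (fun y => b * g y / (b - ‖y‖ ^ 2))
      ((b * g x) • ((-((b - ‖x‖ ^ 2) ^ 2)⁻¹) • ((0 : EuclideanSpace ℝ (Fin n) →L[ℝ] ℝ) - 2 • innerSL ℝ x))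
        + ((b - ‖x‖ ^ 2)⁻¹) • (b • (InnerProductSpace.toDual ℝ _) Gg)) x := by
    simpa [div_eq_mul_inv, Pi.mul_def, Function.comp_def] using hmul
  apply hasGradientAt_of_hasFDerivAt hdiv
  intro v
  simp only [ContinuousLinearMap.smul_apply, ContinuousLinearMap.add_apply,
    ContinuousLinearMap.sub_apply, ContinuousLinearMap.zero_apply, innerSL_apply_apply,
    ContinuousLinearMap.coe_smul', Pi.smul_apply, smul_eq_mul, inner_add_left,
    real_inner_smul_left,
    InnerProductSpace.toDual_apply_apply, nsmul_eq_mul, Nat.cast_ofNat]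
  field_simp
  ring

lemma vdiv_congr {F G : EuclideanSpace ℝ (Fin n) → EuclideanSpace ℝ (Fin n)}
    {m : EuclideanSpace ℝ (Fin n)} (h : F =ᶠ[nhds m] G) : vdiv F m = vdiv G m := by
  unfold vdiv
  rw [Filter.EventuallyEq.fderiv_eq h]

end Helpers

set_option maxHeartbeats 2000000 in
/-- Transformation identity for `f = w ρ^{b/2−α} e^{Kt}` with `ρ(m) = b − ‖m‖²`,
`κ` trace-free and
`c(m) = −Kρ² + α[nb + (2α+2−n−b)‖m‖²] + (b−2α)ρ(m·κm)`: on `(0,T)×B`,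
`e^{−Kt} ρ^{α−b/2+2} [∂_t f + ∇·((κm)f) − (1/2)∇·((bm/ρ)f) − (1/2)Δf]
  = ρ²∂_t w − (1/2)ρ²Δw − ρ[((4α−b)/2)m − ρκm]·∇w − c w`;
in particular `f` solves the Fokker–Planck equation iff `w` solves the transformed
equation. -/
theorem fokker_planck_transformation_exp
    (n : ℕ) (hn : 1 ≤ n) (b T α K : ℝ) (hT : 0 < T)
    (κ : Matrix (Fin n) (Fin n) ℝ) (hκ : Matrix.trace κ = 0)
    (w : ℝ → EuclideanSpace ℝ (Fin n) → ℝ)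
    (hwt : ∀ m ∈ Metric.ball (0 : EuclideanSpace ℝ (Fin n)) (Real.sqrt b),
      ContDiffOn ℝ 1 (fun s => w s m) (Set.Ioo 0 T))
    (hwm : ∀ t ∈ Set.Ioo (0 : ℝ) T,
      ContDiffOn ℝ 2 (w t) (Metric.ball (0 : EuclideanSpace ℝ (Fin n)) (Real.sqrt b)))
    (f : ℝ → EuclideanSpace ℝ (Fin n) → ℝ)
    (hf : ∀ s : ℝ, ∀ x : EuclideanSpace ℝ (Fin n),
      f s x = w s x * (b - ‖x‖ ^ 2) ^ (b / 2 - α) * Real.exp (K * s))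
    (c : EuclideanSpace ℝ (Fin n) → ℝ)
    (hc : ∀ m : EuclideanSpace ℝ (Fin n),
      c m = -K * (b - ‖m‖ ^ 2) ^ 2
        + α * ((n : ℝ) * b + (2 * α + 2 - (n : ℝ) - b) * ‖m‖ ^ 2)
        + (b - 2 * α) * (b - ‖m‖ ^ 2) * ⟪m, Matrix.toEuclideanLin κ m⟫) :
    (∀ t ∈ Set.Ioo (0 : ℝ) T,
      ∀ m ∈ Metric.ball (0 : EuclideanSpace ℝ (Fin n)) (Real.sqrt b),
        Real.exp (-(K * t)) * (b - ‖m‖ ^ 2) ^ (α - b / 2 + 2) *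
            (deriv (fun s => f s m) t
              + vdiv (fun x => f t x • Matrix.toEuclideanLin κ x) m
              - (1 / 2) * vdiv (fun x => (b * f t x / (b - ‖x‖ ^ 2)) • x) m
              - (1 / 2) * lap (f t) m)
          = (b - ‖m‖ ^ 2) ^ 2 * deriv (fun s => w s m) t
              - (1 / 2) * (b - ‖m‖ ^ 2) ^ 2 * lap (w t) m
              - (b - ‖m‖ ^ 2) *
                  ⟪((4 * α - b) / 2) • m - (b - ‖m‖ ^ 2) • Matrix.toEuclideanLin κ m,
                    gradient (w t) m⟫
              - c m * w t m) ∧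
    ((∀ t ∈ Set.Ioo (0 : ℝ) T,
        ∀ m ∈ Metric.ball (0 : EuclideanSpace ℝ (Fin n)) (Real.sqrt b),
          deriv (fun s => f s m) t
              + vdiv (fun x => f t x • Matrix.toEuclideanLin κ x) m
            = (1 / 2) * vdiv (fun x => (b * f t x / (b - ‖x‖ ^ 2)) • x) m
              + (1 / 2) * lap (f t) m) ↔
      (∀ t ∈ Set.Ioo (0 : ℝ) T,
        ∀ m ∈ Metric.ball (0 : EuclideanSpace ℝ (Fin n)) (Real.sqrt b),
          (b - ‖m‖ ^ 2) ^ 2 * deriv (fun s => w s m) t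
              - (1 / 2) * (b - ‖m‖ ^ 2) ^ 2 * lap (w t) m
              - (b - ‖m‖ ^ 2) *
                  ⟪((4 * α - b) / 2) • m - (b - ‖m‖ ^ 2) • Matrix.toEuclideanLin κ m,
                    gradient (w t) m⟫
              - c m * w t m = 0)) := by
  have key : ∀ t ∈ Set.Ioo (0 : ℝ) T,
      ∀ m ∈ Metric.ball (0 : EuclideanSpace ℝ (Fin n)) (Real.sqrt b),
        Real.exp (-(K * t)) * (b - ‖m‖ ^ 2) ^ (α - b / 2 + 2) *
            (deriv (fun s => f s m) t
              + vdiv (fun x => f t x • Matrix.toEuclideanLin κ x) m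
              - (1 / 2) * vdiv (fun x => (b * f t x / (b - ‖x‖ ^ 2)) • x) m
              - (1 / 2) * lap (f t) m)
          = (b - ‖m‖ ^ 2) ^ 2 * deriv (fun s => w s m) t
              - (1 / 2) * (b - ‖m‖ ^ 2) ^ 2 * lap (w t) m
              - (b - ‖m‖ ^ 2) *
                  ⟪((4 * α - b) / 2) • m - (b - ‖m‖ ^ 2) • Matrix.toEuclideanLin κ m,
                    gradient (w t) m⟫
              - c m * w t m := by
    intro t ht m hm
    have hm' : ‖m‖ < Real.sqrt b := mem_ball_zero_iff.mp hm
    have hb : 0 < b := Real.sqrt_pos.mp (lt_of_le_of_lt (norm_nonneg m) hm')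
    have hρx : ∀ x ∈ Metric.ball (0 : EuclideanSpace ℝ (Fin n)) (Real.sqrt b),
        0 < b - ‖x‖ ^ 2 := by
      intro x hx
      have hx' : ‖x‖ < Real.sqrt b := mem_ball_zero_iff.mp hx
      have h2 : ‖x‖ ^ 2 < Real.sqrt b ^ 2 := by
        apply pow_lt_pow_left₀ hx' (norm_nonneg x)
        norm_num
      rw [Real.sq_sqrt hb.le] at h2
      linarith
    have hρm := hρx m hm
    have hρ0 : (b - ‖m‖ ^ 2) ≠ 0 := ne_of_gt hρm
    have hopen : IsOpen (Metric.ball (0 : EuclideanSpace ℝ (Fin n)) (Real.sqrt b)) :=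
      Metric.isOpen_ball
    have hwd : ∀ x ∈ Metric.ball (0 : EuclideanSpace ℝ (Fin n)) (Real.sqrt b),
        DifferentiableAt ℝ (w t) x := by
      intro x hx
      exact ((hwm t ht).differentiableOn (by norm_num)).differentiableAt (hopen.mem_nhds hx)
    have hgradw : DifferentiableAt ℝ (fun x => gradient (w t) x) m := by
      have hc2 : ContDiffAt ℝ 2 (w t) m := (hwm t ht).contDiffAt (hopen.mem_nhds hm)
      have h1 : ContDiffAt ℝ 1 (fderiv ℝ (w t)) m := hc2.fderiv_right (by norm_num)
      have hd : DifferentiableAt ℝ (fderiv ℝ (w t)) m := h1.differentiableAt (by norm_num)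
      exact ((InnerProductSpace.toDual ℝ
        (EuclideanSpace ℝ (Fin n))).symm.differentiable.differentiableAt).comp m hd
    have hWt : HasDerivAt (fun s => w s m) (deriv (fun s => w s m) t) t := by
      have := ((hwt m hm).differentiableOn one_ne_zero).differentiableAt
        (isOpen_Ioo.mem_nhds ht)
      exact this.hasDerivAt
    have hE : HasDerivAt (fun s => Real.exp (K * s)) (Real.exp (K * t) * K) t := by
      have h1 : HasDerivAt (fun s : ℝ => K * s) K t := by
        simpa using (hasDerivAt_id t).const_mul K
      exact h1.exp
    have hg : ∀ x ∈ Metric.ball (0 : EuclideanSpace ℝ (Fin n)) (Real.sqrt b),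
        HasGradientAt (fun y => w t y * (b - ‖y‖ ^ 2) ^ (b / 2 - α) * Real.exp (K * t))
          (((b - ‖x‖ ^ 2) ^ (b / 2 - α) * Real.exp (K * t)) • gradient (w t) x
            + ((-2 * (b / 2 - α)) * (b - ‖x‖ ^ 2) ^ (b / 2 - α - 1) * w t x
                * Real.exp (K * t)) • x) x :=
      fun x hx => hasGradientAt_mul_rpow (b / 2 - α) (Real.exp (K * t)) (hwd x hx)
        (ne_of_gt (hρx x hx))
    have hgm := hg m hm
    -- Term A: time derivative
    have hA : deriv (fun s => f s m) t
        = deriv (fun s => w s m) t * (b - ‖m‖ ^ 2) ^ (b / 2 - α) * Real.exp (K * t)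
          + w t m * (b - ‖m‖ ^ 2) ^ (b / 2 - α) * (Real.exp (K * t) * K) := by
      have h1 : (fun s => f s m)
          = fun s => (w s m * (b - ‖m‖ ^ 2) ^ (b / 2 - α)) * Real.exp (K * s) := by
        funext s; rw [hf]
      rw [h1]; exact ((hWt.mul_const ((b - ‖m‖ ^ 2) ^ (b / 2 - α))).mul hE).deriv
    -- Term B
    have hB : vdiv (fun x => (w t x * (b - ‖x‖ ^ 2) ^ (b / 2 - α) * Real.exp (K * t)) •
          Matrix.toEuclideanLin κ x) m
        = (b - ‖m‖ ^ 2) ^ (b / 2 - α) * Real.exp (K * t)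
            * ⟪gradient (w t) m, Matrix.toEuclideanLin κ m⟫
          + (-2 * (b / 2 - α)) * (b - ‖m‖ ^ 2) ^ (b / 2 - α - 1) * w t m * Real.exp (K * t)
            * ⟪m, Matrix.toEuclideanLin κ m⟫ := by
      rw [vdiv_smul hgm.differentiableAt (diffAt_toEuclideanLin κ m),
        vdiv_toEuclideanLin, hκ, hgm.gradient]
      simp only [inner_add_left, real_inner_smul_left]
      ring
    -- Term C
    have hh := hasGradientAt_bdiv hgm hρ0
    have hC2 : vdiv (fun x =>
          (b * (w t x * (b - ‖x‖ ^ 2) ^ (b / 2 - α) * Real.exp (K * t)) / (b - ‖x‖ ^ 2)) • x) m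
        = (b / (b - ‖m‖ ^ 2)) * ((b - ‖m‖ ^ 2) ^ (b / 2 - α) * Real.exp (K * t)
              * ⟪gradient (w t) m, m⟫
            + (-2 * (b / 2 - α)) * (b - ‖m‖ ^ 2) ^ (b / 2 - α - 1) * w t m * Real.exp (K * t)
              * ‖m‖ ^ 2)
          + (2 * b * (w t m * (b - ‖m‖ ^ 2) ^ (b / 2 - α) * Real.exp (K * t))
              / (b - ‖m‖ ^ 2) ^ 2) * ‖m‖ ^ 2
          + (b * (w t m * (b - ‖m‖ ^ 2) ^ (b / 2 - α) * Real.exp (K * t)) / (b - ‖m‖ ^ 2)) * n := by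
      rw [vdiv_smul hh.differentiableAt differentiableAt_fun_id, vdiv_id, hh.gradient]
      simp only [inner_add_left, real_inner_smul_left, real_inner_self_eq_norm_sq]
    -- Term D
    have ha1 : HasGradientAt (fun y => (b - ‖y‖ ^ 2) ^ (b / 2 - α) * Real.exp (K * t))
        ((-2 * (b / 2 - α) * (b - ‖m‖ ^ 2) ^ (b / 2 - α - 1) * Real.exp (K * t)) • m) m := by
      have h := hasGradientAt_mul_rpow (u := fun _ => (1 : ℝ)) (b / 2 - α) (Real.exp (K * t))
        (differentiableAt_const 1) hρ0
      simp only [one_mul, gradient_fun_const, smul_zero, zero_add, mul_one] at h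
      exact h
    have ha2 : HasGradientAt
        (fun y => w t y * (b - ‖y‖ ^ 2) ^ (b / 2 - α - 1) * (-2 * (b / 2 - α) * Real.exp (K * t)))
        (((b - ‖m‖ ^ 2) ^ (b / 2 - α - 1) * (-2 * (b / 2 - α) * Real.exp (K * t)))
            • gradient (w t) m
          + ((-2 * (b / 2 - α - 1)) * (b - ‖m‖ ^ 2) ^ (b / 2 - α - 1 - 1) * w t m
              * (-2 * (b / 2 - α) * Real.exp (K * t))) • m) m :=
      hasGradientAt_mul_rpow (b / 2 - α - 1) (-2 * (b / 2 - α) * Real.exp (K * t)) (hwd m hm) hρ0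
    have hgrad_eq : (gradient (fun y => w t y * (b - ‖y‖ ^ 2) ^ (b / 2 - α) * Real.exp (K * t)))
        =ᶠ[nhds m]
        (fun x => ((b - ‖x‖ ^ 2) ^ (b / 2 - α) * Real.exp (K * t)) • gradient (w t) x
          + (w t x * (b - ‖x‖ ^ 2) ^ (b / 2 - α - 1) * (-2 * (b / 2 - α) * Real.exp (K * t))) • x) := by
      filter_upwards [hopen.mem_nhds hm] with x hx
      rw [(hg x hx).gradient]
      congr 1
      rw [show (-2 * (b / 2 - α)) * (b - ‖x‖ ^ 2) ^ (b / 2 - α - 1) * w t x * Real.exp (K * t)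
        = w t x * (b - ‖x‖ ^ 2) ^ (b / 2 - α - 1) * (-2 * (b / 2 - α) * Real.exp (K * t)) from by ring]
    have hD : lap (fun y => w t y * (b - ‖y‖ ^ 2) ^ (b / 2 - α) * Real.exp (K * t)) m
        = (-2 * (b / 2 - α) * (b - ‖m‖ ^ 2) ^ (b / 2 - α - 1) * Real.exp (K * t))
            * ⟪m, gradient (w t) m⟫
          + ((b - ‖m‖ ^ 2) ^ (b / 2 - α) * Real.exp (K * t)) * lap (w t) m
          + (((b - ‖m‖ ^ 2) ^ (b / 2 - α - 1) * (-2 * (b / 2 - α) * Real.exp (K * t)))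
              * ⟪gradient (w t) m, m⟫
            + ((-2 * (b / 2 - α - 1)) * (b - ‖m‖ ^ 2) ^ (b / 2 - α - 1 - 1) * w t m
                * (-2 * (b / 2 - α) * Real.exp (K * t))) * ‖m‖ ^ 2)
          + (w t m * (b - ‖m‖ ^ 2) ^ (b / 2 - α - 1) * (-2 * (b / 2 - α) * Real.exp (K * t))) * n := by
      have h0 : lap (fun y => w t y * (b - ‖y‖ ^ 2) ^ (b / 2 - α) * Real.exp (K * t)) m
          = vdiv (fun x => ((b - ‖x‖ ^ 2) ^ (b / 2 - α) * Real.exp (K * t)) • gradient (w t) x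
              + (w t x * (b - ‖x‖ ^ 2) ^ (b / 2 - α - 1)
                  * (-2 * (b / 2 - α) * Real.exp (K * t))) • x) m :=
        vdiv_congr hgrad_eq
      rw [h0, vdiv_add (ha1.differentiableAt.fun_smul hgradw)
          (ha2.differentiableAt.fun_smul differentiableAt_fun_id),
        vdiv_smul ha1.differentiableAt hgradw, ha1.gradient,
        vdiv_smul ha2.differentiableAt differentiableAt_fun_id, ha2.gradient, vdiv_id]
      simp only [inner_add_left, real_inner_smul_left, real_inner_self_eq_norm_sq]
      ring_nf
      rfl
    -- rewrite the goal
    have hfeq : f t = fun x => w t x * (b - ‖x‖ ^ 2) ^ (b / 2 - α) * Real.exp (K * t) := by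
      funext x; rw [hf]
    rw [hA, hfeq]
    beta_reduce
    rw [hB, hC2, hD, hc m]
    simp only [inner_sub_left, real_inner_smul_left]
    rw [real_inner_comm (gradient (w t) m) m,
      real_inner_comm (gradient (w t) m) (Matrix.toEuclideanLin κ m)]
    -- rpow arithmetic
    have hP0 : (0 : ℝ) < (b - ‖m‖ ^ 2) ^ (b / 2 - α) := Real.rpow_pos_of_pos hρm _
    have e1 : (b - ‖m‖ ^ 2) ^ (b / 2 - α - 1)
        = (b - ‖m‖ ^ 2) ^ (b / 2 - α) / (b - ‖m‖ ^ 2) := by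
      rw [eq_div_iff hρ0, ← Real.rpow_add_one hρ0]
      congr 1; ring
    have e2 : (b - ‖m‖ ^ 2) ^ (b / 2 - α - 1 - 1)
        = (b - ‖m‖ ^ 2) ^ (b / 2 - α) / (b - ‖m‖ ^ 2) ^ 2 := by
      rw [eq_div_iff (pow_ne_zero 2 hρ0),
        show ((b - ‖m‖ ^ 2) : ℝ) ^ 2 = (b - ‖m‖ ^ 2) * (b - ‖m‖ ^ 2) from by ring,
        ← mul_assoc, ← Real.rpow_add_one hρ0, ← Real.rpow_add_one hρ0]
      congr 1; ring
    have e3 : (b - ‖m‖ ^ 2) ^ (α - b / 2 + 2)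
        = (b - ‖m‖ ^ 2) ^ 2 / (b - ‖m‖ ^ 2) ^ (b / 2 - α) := by
      rw [eq_div_iff (ne_of_gt hP0), ← Real.rpow_add hρm,
        show α - b / 2 + 2 + (b / 2 - α) = ((2 : ℕ) : ℝ) by push_cast; ring,
        Real.rpow_natCast]
    have e4 : Real.exp (-(K * t)) = 1 / Real.exp (K * t) := by
      rw [Real.exp_neg, one_div]
    rw [e1, e2, e3, e4]
    have hexp0 : Real.exp (K * t) ≠ 0 := Real.exp_ne_zero _
    field_simp
    ring
  refine ⟨key, ?_⟩
  constructor
  · intro h t ht m hm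
    rw [← key t ht m hm]
    have h0 := h t ht m hm
    have hX : (deriv (fun s => f s m) t
        + vdiv (fun x => f t x • Matrix.toEuclideanLin κ x) m
        - (1 / 2) * vdiv (fun x => (b * f t x / (b - ‖x‖ ^ 2)) • x) m
        - (1 / 2) * lap (f t) m) = 0 := by linarith
    rw [hX, mul_zero]
  · intro h t ht m hm
    have h0 := h t ht m hm
    have hkey := key t ht m hm
    rw [h0] at hkey
    have hm' : ‖m‖ < Real.sqrt b := mem_ball_zero_iff.mp hm
    have hb : 0 < b := Real.sqrt_pos.mp (lt_of_le_of_lt (norm_nonneg m) hm')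
    have hρm : 0 < b - ‖m‖ ^ 2 := by
      have h2 : ‖m‖ ^ 2 < Real.sqrt b ^ 2 := by
        apply pow_lt_pow_left₀ hm' (norm_nonneg m)
        norm_num
      rw [Real.sq_sqrt hb.le] at h2
      linarith
    have hne : Real.exp (-(K * t)) * (b - ‖m‖ ^ 2) ^ (α - b / 2 + 2) ≠ 0 :=
      ne_of_gt (mul_pos (Real.exp_pos _) (Real.rpow_pos_of_pos hρm _))
    have hX := (mul_eq_zero.mp hkey).resolve_left hne
    linarith
end
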